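/- arXiv:1009.1262 — 6 statements merged into one kernel-verified Lean document; each statement's English description precedes it below -/
import Mathlib

section
/- Let U ⊆ ℝ² be open and connected, invariant under the reflection σ(x, y) = (x, −y), and suppose U contains at least one point of the x-axis. If u is harmonic on U and u(x, 0) = 0 for every point (x, 0) ∈ U, then u(x, −y) = −u(x, y) for every (x, y) ∈ U. -/
/-- Partial derivative with respect to the first variable. -/
noncomputable def pdx (u : ℝ × ℝ → ℝ) (p : ℝ × ℝ) : ℝ :=
  deriv (fun x : ℝ => u (x, p.2)) p.1

/-- Partial derivative with respect to the second variable. -/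
noncomputable def pdy (u : ℝ × ℝ → ℝ) (p : ℝ × ℝ) : ℝ :=
  deriv (fun y : ℝ => u (p.1, y)) p.2

open Filter Set Complex Topology

section AuxLemmas


lemma sliceX {E : Type*} [NormedAddCommGroup E] [NormedSpace ℝ E]
    {F : ℝ × ℝ → E} {L : ℝ × ℝ →L[ℝ] E} {p : ℝ × ℝ} (h : HasFDerivAt F L p) :
    HasDerivAt (fun x : ℝ => F (x, p.2)) (L (1, 0)) p.1 :=
  h.comp_hasDerivAt p.1 ((hasDerivAt_id p.1).prodMk (hasDerivAt_const p.1 p.2))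

lemma sliceY {E : Type*} [NormedAddCommGroup E] [NormedSpace ℝ E]
    {F : ℝ × ℝ → E} {L : ℝ × ℝ →L[ℝ] E} {p : ℝ × ℝ} (h : HasFDerivAt F L p) :
    HasDerivAt (fun y : ℝ => F (p.1, y)) (L (0, 1)) p.2 :=
  h.comp_hasDerivAt p.2 ((hasDerivAt_const p.2 p.1).prodMk (hasDerivAt_id p.2))

lemma pdx_eq {v : ℝ × ℝ → ℝ} {L : ℝ × ℝ →L[ℝ] ℝ} {p : ℝ × ℝ} (h : HasFDerivAt v L p) :
    pdx v p = L (1, 0) := (sliceX h).deriv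

lemma pdy_eq {v : ℝ × ℝ → ℝ} {L : ℝ × ℝ →L[ℝ] ℝ} {p : ℝ × ℝ} (h : HasFDerivAt v L p) :
    pdy v p = L (0, 1) := (sliceY h).deriv

lemma pdx_pdx_eq {U : Set (ℝ × ℝ)} (hU : IsOpen U) {v : ℝ × ℝ → ℝ}
    {A : ℝ × ℝ → (ℝ × ℝ →L[ℝ] ℝ)} {H : ℝ × ℝ →L[ℝ] (ℝ × ℝ →L[ℝ] ℝ)} {p : ℝ × ℝ} (hp : p ∈ U)
    (hd : ∀ q ∈ U, HasFDerivAt v (A q) q) (hA : HasFDerivAt A H p) :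
    pdx (pdx v) p = H (1, 0) (1, 0) := by
  have hmem : ∀ᶠ x in 𝓝 p.1, (x, p.2) ∈ U :=
    (hU.preimage (Continuous.prodMk continuous_id continuous_const)).mem_nhds hp
  have hee : (fun x => pdx v (x, p.2)) =ᶠ[𝓝 p.1] fun x => A (x, p.2) (1, 0) :=
    hmem.mono fun x hx => pdx_eq (hd _ hx)
  have h3 : HasDerivAt (fun x => A (x, p.2) ((1 : ℝ), (0 : ℝ))) (H (1, 0) (1, 0)) p.1 := by
    simpa using (sliceX hA).clm_apply (hasDerivAt_const _ _)
  exact hee.deriv_eq.trans h3.deriv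

lemma pdy_pdy_eq {U : Set (ℝ × ℝ)} (hU : IsOpen U) {v : ℝ × ℝ → ℝ}
    {A : ℝ × ℝ → (ℝ × ℝ →L[ℝ] ℝ)} {H : ℝ × ℝ →L[ℝ] (ℝ × ℝ →L[ℝ] ℝ)} {p : ℝ × ℝ} (hp : p ∈ U)
    (hd : ∀ q ∈ U, HasFDerivAt v (A q) q) (hA : HasFDerivAt A H p) :
    pdy (pdy v) p = H (0, 1) (0, 1) := by
  have hmem : ∀ᶠ y in 𝓝 p.2, (p.1, y) ∈ U :=
    (hU.preimage (Continuous.prodMk continuous_const continuous_id)).mem_nhds hp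
  have hee : (fun y => pdy v (p.1, y)) =ᶠ[𝓝 p.2] fun y => A (p.1, y) (0, 1) :=
    hmem.mono fun y hy => pdy_eq (hd _ hy)
  have h3 : HasDerivAt (fun y => A (p.1, y) ((0 : ℝ), (1 : ℝ))) (H (0, 1) (0, 1)) p.2 := by
    simpa using (sliceY hA).clm_apply (hasDerivAt_const _ _)
  exact hee.deriv_eq.trans h3.deriv

lemma refl_pdx_pdx (u : ℝ × ℝ → ℝ) (p : ℝ × ℝ) :
    pdx (pdx (fun q : ℝ × ℝ => u (q.1, -q.2))) p = pdx (pdx u) (p.1, -p.2) := rfl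

lemma refl_pdy (u : ℝ × ℝ → ℝ) (q : ℝ × ℝ) :
    pdy (fun q : ℝ × ℝ => u (q.1, -q.2)) q = -(pdy u (q.1, -q.2)) := by
  show deriv (fun y : ℝ => u (q.1, -y)) q.2 = _
  exact deriv_comp_neg (f := fun y : ℝ => u (q.1, y)) (x := q.2)

lemma refl_pdy_pdy (u : ℝ × ℝ → ℝ) (p : ℝ × ℝ) :
    pdy (pdy (fun q : ℝ × ℝ => u (q.1, -q.2))) p = pdy (pdy u) (p.1, -p.2) := by
  have h1 : (fun y : ℝ => pdy (fun q : ℝ × ℝ => u (q.1, -q.2)) (p.1, y))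
      = fun y : ℝ => -(pdy u (p.1, -y)) := by
    funext y; exact refl_pdy u (p.1, y)
  show deriv _ p.2 = _
  rw [h1]
  have h2 : deriv (fun y : ℝ => -(pdy u (p.1, -y))) p.2
      = -(deriv (fun y : ℝ => pdy u (p.1, -y)) p.2) := deriv.neg
  rw [h2, deriv_comp_neg (f := fun y : ℝ => pdy u (p.1, y)) (x := p.2), neg_neg]
  rfl

end AuxLemmas


set_option maxHeartbeats 1000000 in
/-- Schwarz reflection principle across the line `y = 0`. -/
theorem schwarz_reflection_line
    (U : Set (ℝ × ℝ)) (hUopen : IsOpen U) (hUconn : IsConnected U)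
    (hUsym : (fun p : ℝ × ℝ => (p.1, -p.2)) '' U = U)
    (hUaxis : ∃ x : ℝ, (x, (0 : ℝ)) ∈ U)
    (u : ℝ × ℝ → ℝ) (hu : ContDiffOn ℝ 2 u U)
    (hharm : ∀ p ∈ U, pdx (pdx u) p + pdy (pdy u) p = 0)
    (hzero : ∀ x : ℝ, (x, (0 : ℝ)) ∈ U → u (x, 0) = 0) :
    ∀ p ∈ U, u (p.1, -p.2) = -u p := by
  obtain ⟨x₀, hx₀⟩ := hUaxis
  have hσmem : ∀ p ∈ U, ((p.1, -p.2) : ℝ × ℝ) ∈ U := fun p hp => by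
    rw [← hUsym]; exact ⟨p, hp, rfl⟩
  set w : ℝ × ℝ → ℝ := fun p => u (p.1, -p.2) with hwdef
  set v : ℝ × ℝ → ℝ := fun p => w p + u p with hvdef
  have hσc : ContDiff ℝ 2 (fun p : ℝ × ℝ => ((p.1, -p.2) : ℝ × ℝ)) :=
    contDiff_fst.prodMk contDiff_snd.neg
  have hw : ContDiffOn ℝ 2 w U := by
    rw [hwdef]; exact hu.comp hσc.contDiffOn (fun p hp => hσmem p hp)
  have hv : ContDiffOn ℝ 2 v U := by rw [hvdef]; exact hw.add hu
  -- first derivatives exist on U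
  have hDat : ∀ (f : ℝ × ℝ → ℝ), ContDiffOn ℝ 2 f U → ∀ p ∈ U,
      HasFDerivAt f (fderiv ℝ f p) p := by
    intro f hf p hp
    exact ((hf.differentiableOn (by norm_num) p hp).differentiableAt
      (hUopen.mem_nhds hp)).hasFDerivAt
  have hud := hDat u hu
  have hwd := hDat w hw
  have hvd := hDat v hv
  -- second derivatives exist on U
  have hDat2 : ∀ (f : ℝ × ℝ → ℝ), ContDiffOn ℝ 2 f U → ∀ p ∈ U,
      HasFDerivAt (fderiv ℝ f) (fderiv ℝ (fderiv ℝ f) p) p := by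
    intro f hf p hp
    have h1 : ContDiffOn ℝ 1 (fderiv ℝ f) U := hf.fderiv_of_isOpen hUopen (by norm_num)
    exact ((h1.differentiableOn (by norm_num) p hp).differentiableAt
      (hUopen.mem_nhds hp)).hasFDerivAt
  have hud2 := hDat2 u hu
  have hwd2 := hDat2 w hw
  set A : ℝ × ℝ → (ℝ × ℝ →L[ℝ] ℝ) := fderiv ℝ v with hAdef
  have hvd2 := hDat2 v hv
  set Hv : ℝ × ℝ → (ℝ × ℝ →L[ℝ] (ℝ × ℝ →L[ℝ] ℝ)) := fderiv ℝ A with hHdef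
  -- harmonicity transferred to Hv
  have hΔu : ∀ p ∈ U, fderiv ℝ (fderiv ℝ u) p (1, 0) (1, 0)
      + fderiv ℝ (fderiv ℝ u) p (0, 1) (0, 1) = 0 := by
    intro p hp
    rw [← pdx_pdx_eq hUopen hp hud (hud2 p hp), ← pdy_pdy_eq hUopen hp hud (hud2 p hp)]
    exact hharm p hp
  have hΔw : ∀ p ∈ U, fderiv ℝ (fderiv ℝ w) p (1, 0) (1, 0)
      + fderiv ℝ (fderiv ℝ w) p (0, 1) (0, 1) = 0 := by
    intro p hp
    have e1 : pdx (pdx w) p = pdx (pdx u) (p.1, -p.2) := by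
      rw [hwdef]; exact refl_pdx_pdx u p
    have e2 : pdy (pdy w) p = pdy (pdy u) (p.1, -p.2) := by
      rw [hwdef]; exact refl_pdy_pdy u p
    rw [← pdx_pdx_eq hUopen hp hwd (hwd2 p hp), ← pdy_pdy_eq hUopen hp hwd (hwd2 p hp),
      e1, e2]
    exact hharm _ (hσmem p hp)
  have hHsum : ∀ p ∈ U, Hv p = fderiv ℝ (fderiv ℝ w) p + fderiv ℝ (fderiv ℝ u) p := by
    intro p hp
    have hsum : ∀ q ∈ U, A q = fderiv ℝ w q + fderiv ℝ u q := by
      intro q hq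
      rw [hAdef, hvdef]
      exact ((hwd q hq).add (hud q hq)).fderiv
    have hev : A =ᶠ[𝓝 p] fun q => fderiv ℝ w q + fderiv ℝ u q :=
      eventually_of_mem (hUopen.mem_nhds hp) hsum
    rw [hHdef, hev.fderiv_eq]
    exact fderiv_add (hwd2 p hp).differentiableAt (hud2 p hp).differentiableAt
  have hΔv : ∀ p ∈ U, Hv p (1, 0) (1, 0) + Hv p (0, 1) (0, 1) = 0 := by
    intro p hp
    rw [hHsum p hp]
    simp only [ContinuousLinearMap.add_apply]
    have h1 := hΔw p hp
    have h2 := hΔu p hp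
    linarith
  -- symmetry of the second derivative
  have hHsymm : ∀ p ∈ U, Hv p (1, 0) (0, 1) = Hv p (0, 1) (1, 0) := by
    intro p hp
    exact second_derivative_symmetric_of_eventually
      (eventually_of_mem (hUopen.mem_nhds hp) hvd) (hvd2 p hp) _ _
  -- the complex function g = v_x - i·v_y
  set g : ℂ → ℂ := fun z => ((A (z.re, z.im) (1, 0) : ℝ) : ℂ)
    - Complex.I * ((A (z.re, z.im) (0, 1) : ℝ) : ℂ) with hgdef
  set Uc : Set ℂ := (fun z : ℂ => ((z.re, z.im) : ℝ × ℝ)) ⁻¹' U with hUcdef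
  have hρcont : Continuous (fun z : ℂ => ((z.re, z.im) : ℝ × ℝ)) :=
    Complex.continuous_re.prodMk Complex.continuous_im
  have hUcopen : IsOpen Uc := hUopen.preimage hρcont
  have hUcconn : IsPreconnected Uc := by
    have himg : Uc = (⇑Complex.equivRealProdCLM.symm) '' U := by
      ext z
      constructor
      · intro hz
        exact ⟨(z.re, z.im), hz, by simp [Complex.ext_iff]⟩
      · rintro ⟨q, hq, rfl⟩
        show ((Complex.equivRealProdCLM.symm q).re, (Complex.equivRealProdCLM.symm q).im) ∈ U
        simpa using hq
    rw [himg]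
    exact hUconn.isPreconnected.image _ Complex.equivRealProdCLM.symm.continuous.continuousOn
  -- g is complex differentiable on Uc
  have hρ : ∀ z : ℂ, HasFDerivAt (fun z : ℂ => ((z.re, z.im) : ℝ × ℝ))
      (Complex.reCLM.prod Complex.imCLM) z := fun z =>
    (Complex.reCLM.prod Complex.imCLM).hasFDerivAt
  have hgdiff : ∀ z ∈ Uc, DifferentiableAt ℂ g z := by
    intro z hz
    have hp : ((z.re, z.im) : ℝ × ℝ) ∈ U := hz
    have hAρ : HasFDerivAt (fun z : ℂ => A (z.re, z.im))
        ((Hv (z.re, z.im)).comp (Complex.reCLM.prod Complex.imCLM)) z :=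
      (hvd2 _ hp).comp z (hρ z)
    have h1 : HasFDerivAt (fun z : ℂ => A (z.re, z.im) ((1 : ℝ), (0 : ℝ)))
        ((ContinuousLinearMap.apply ℝ ℝ ((1 : ℝ), (0 : ℝ))).comp
          ((Hv (z.re, z.im)).comp (Complex.reCLM.prod Complex.imCLM))) z :=
      (ContinuousLinearMap.apply ℝ ℝ ((1 : ℝ), (0 : ℝ))).hasFDerivAt.comp z hAρ
    have h2 : HasFDerivAt (fun z : ℂ => A (z.re, z.im) ((0 : ℝ), (1 : ℝ)))
        ((ContinuousLinearMap.apply ℝ ℝ ((0 : ℝ), (1 : ℝ))).comp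
          ((Hv (z.re, z.im)).comp (Complex.reCLM.prod Complex.imCLM))) z :=
      (ContinuousLinearMap.apply ℝ ℝ ((0 : ℝ), (1 : ℝ))).hasFDerivAt.comp z hAρ
    set L1 := (ContinuousLinearMap.apply ℝ ℝ ((1 : ℝ), (0 : ℝ))).comp
      ((Hv (z.re, z.im)).comp (Complex.reCLM.prod Complex.imCLM)) with hL1
    set L2 := (ContinuousLinearMap.apply ℝ ℝ ((0 : ℝ), (1 : ℝ))).comp
      ((Hv (z.re, z.im)).comp (Complex.reCLM.prod Complex.imCLM)) with hL2
    have hg1 : HasFDerivAt g (Complex.ofRealCLM.comp L1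
        - Complex.I • (Complex.ofRealCLM.comp L2)) z := by
      rw [hgdef]
      have ha : HasFDerivAt (fun z : ℂ => ((A (z.re, z.im) ((1 : ℝ), (0 : ℝ)) : ℝ) : ℂ))
          (Complex.ofRealCLM.comp L1) z := Complex.ofRealCLM.hasFDerivAt.comp z h1
      have hb : HasFDerivAt (fun z : ℂ => ((A (z.re, z.im) ((0 : ℝ), (1 : ℝ)) : ℝ) : ℂ))
          (Complex.ofRealCLM.comp L2) z := Complex.ofRealCLM.hasFDerivAt.comp z h2
      exact ha.sub (hb.const_mul Complex.I)
    set a : ℝ := Hv (z.re, z.im) (1, 0) (1, 0) with hadef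
    set b : ℝ := Hv (z.re, z.im) (0, 1) (1, 0) with hbdef
    have hlin : (((a : ℂ) - Complex.I * (b : ℂ)) • ContinuousLinearMap.id ℂ ℂ).restrictScalars ℝ
        = Complex.ofRealCLM.comp L1 - Complex.I • (Complex.ofRealCLM.comp L2) := by
      ext h
      have hsplit : ((h.re, h.im) : ℝ × ℝ)
          = h.re • ((1 : ℝ), (0 : ℝ)) + h.im • ((0 : ℝ), (1 : ℝ)) := by
        simp [Prod.ext_iff]
      have hL1h : L1 h = h.re * a + h.im * b := by
        have e : L1 h = Hv (z.re, z.im) (h.re, h.im) ((1 : ℝ), (0 : ℝ)) := by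
          rw [hL1]; simp
        rw [e, hsplit, hadef, hbdef]
        simp only [map_add, map_smul, ContinuousLinearMap.add_apply,
          ContinuousLinearMap.coe_smul', Pi.smul_apply, smul_eq_mul]
      have hL2h : L2 h = h.re * b - h.im * a := by
        have e : L2 h = Hv (z.re, z.im) (h.re, h.im) ((0 : ℝ), (1 : ℝ)) := by
          rw [hL2]; simp
        have hsym := hHsymm _ hp
        have hdel : Hv (z.re, z.im) (0, 1) (0, 1) = -a := by
          have := hΔv _ hp; rw [hadef]; linarith
        rw [e, hsplit]
        simp only [map_add, map_smul, ContinuousLinearMap.add_apply,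
          ContinuousLinearMap.coe_smul', Pi.smul_apply, smul_eq_mul]
        rw [hsym, hdel, hbdef]
        ring
      have key : ((a : ℂ) - Complex.I * (b : ℂ)) * h
          = ((L1 h : ℝ) : ℂ) - Complex.I * ((L2 h : ℝ) : ℂ) := by
        rw [hL1h, hL2h]
        apply Complex.ext <;> simp <;> ring
      simpa using key
    exact (hasFDerivAt_of_restrictScalars ℝ hg1 hlin).differentiableAt
  -- g vanishes at axis points of U
  have hvaxis : ∀ x : ℝ, (x, (0 : ℝ)) ∈ U → v (x, 0) = 0 := by
    intro x hxU
    simp [hvdef, hwdef, hzero x hxU]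
  have hax : ∀ x : ℝ, (x, (0 : ℝ)) ∈ U → g ((x : ℝ) : ℂ) = 0 := by
    intro x hxU
    have hA1 : A (x, (0 : ℝ)) (1, 0) = 0 := by
      rw [← pdx_eq (hvd (x, 0) hxU)]
      have hmem : ∀ᶠ t in 𝓝 x, ((t, (0 : ℝ)) : ℝ × ℝ) ∈ U :=
        (hUopen.preimage (Continuous.prodMk continuous_id continuous_const)).mem_nhds hxU
      have hee : (fun t : ℝ => v (t, 0)) =ᶠ[𝓝 x] fun _ => (0 : ℝ) := by
        filter_upwards [hmem] with t ht
        exact hvaxis t ht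
      show deriv (fun t : ℝ => v (t, 0)) x = 0
      rw [hee.deriv_eq]
      simp
    have hA2 : A (x, (0 : ℝ)) (0, 1) = 0 := by
      rw [← pdy_eq (hvd (x, 0) hxU)]
      show deriv (fun y : ℝ => v (x, y)) 0 = 0
      have heven : (fun y : ℝ => v (x, -y)) = fun y : ℝ => v (x, y) := by
        funext y
        simp only [hvdef, hwdef, neg_neg]
        ring
      have hdc := deriv_comp_neg (f := fun y : ℝ => v (x, y)) (x := (0 : ℝ))
      rw [heven, neg_zero] at hdc
      linarith
    rw [hgdef]
    show ((A ((((x : ℝ) : ℂ)).re, (((x : ℝ) : ℂ)).im) (1, 0) : ℝ) : ℂ)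
      - Complex.I * ((A ((((x : ℝ) : ℂ)).re, (((x : ℝ) : ℂ)).im) (0, 1) : ℝ) : ℂ) = 0
    simp only [Complex.ofReal_re, Complex.ofReal_im]
    rw [hA1, hA2]
    simp
  -- identity theorem
  have hz₀mem : ((x₀ : ℝ) : ℂ) ∈ Uc := by
    show (((x₀ : ℝ) : ℂ).re, ((x₀ : ℝ) : ℂ).im) ∈ U
    simpa using hx₀
  have hg0 : EqOn g 0 Uc := by
    have hdOn : DifferentiableOn ℂ g Uc := fun z hz => (hgdiff z hz).differentiableWithinAt
    have hanalytic : AnalyticOnNhd ℂ g Uc := hdOn.analyticOnNhd hUcopen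
    refine hanalytic.eqOn_zero_of_preconnected_of_frequently_eq_zero hUcconn hz₀mem ?_
    have ht0 : Tendsto (fun n : ℕ => ((n : ℝ) + 1)⁻¹) atTop (𝓝 0) :=
      tendsto_inv_atTop_zero.comp (tendsto_atTop_add_const_right _ 1 tendsto_natCast_atTop_atTop)
    have ht : Tendsto (fun n : ℕ => x₀ + ((n : ℝ) + 1)⁻¹) atTop (𝓝 x₀) := by
      simpa using tendsto_const_nhds.add ht0
    have htz : Tendsto (fun n : ℕ => (((x₀ + ((n : ℝ) + 1)⁻¹ : ℝ)) : ℂ)) atTop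
        (𝓝[≠] ((x₀ : ℝ) : ℂ)) := by
      rw [tendsto_nhdsWithin_iff]
      constructor
      · exact (Complex.continuous_ofReal.tendsto x₀).comp ht
      · refine Eventually.of_forall fun n => ?_
        simp only [mem_compl_iff, mem_singleton_iff, Complex.ofReal_inj]
        have hpos : (0 : ℝ) < ((n : ℝ) + 1)⁻¹ := by positivity
        intro hcontra
        nlinarith [hcontra]
    refine htz.frequently ?_
    have hmem_ev : ∀ᶠ n : ℕ in atTop, ((x₀ + ((n : ℝ) + 1)⁻¹, (0 : ℝ)) : ℝ × ℝ) ∈ U := by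
      have hopen : IsOpen {t : ℝ | ((t, (0 : ℝ)) : ℝ × ℝ) ∈ U} :=
        hUopen.preimage (Continuous.prodMk continuous_id continuous_const)
      exact ht.eventually_mem (hopen.mem_nhds hx₀)
    exact (hmem_ev.mono fun n hn => hax _ hn).frequently
  -- fderiv v vanishes on U
  have hA0 : ∀ p ∈ U, A p = 0 := by
    intro p hp
    have hzUc : (⟨p.1, p.2⟩ : ℂ) ∈ Uc := by
      show (((⟨p.1, p.2⟩ : ℂ)).re, ((⟨p.1, p.2⟩ : ℂ)).im) ∈ U
      exact hp
    have h0 := hg0 hzUc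
    rw [hgdef] at h0
    have h0' : ((A p (1, 0) : ℝ) : ℂ) - Complex.I * ((A p (0, 1) : ℝ) : ℂ) = 0 := h0
    rw [Complex.ext_iff] at h0'
    simp at h0'
    obtain ⟨h1, h2⟩ := h0'
    apply ContinuousLinearMap.ext
    intro q
    have hq : (q : ℝ × ℝ) = q.1 • ((1 : ℝ), (0 : ℝ)) + q.2 • ((0 : ℝ), (1 : ℝ)) := by
      simp [Prod.ext_iff]
    calc A p q = A p (q.1 • ((1 : ℝ), (0 : ℝ)) + q.2 • ((0 : ℝ), (1 : ℝ))) := by rw [← hq]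
    _ = 0 := by
      simp only [map_add, map_smul, smul_eq_mul, h1, h2]
      simp
  -- v vanishes on U (local constancy + connectedness)
  have hSopen : IsOpen {p : ℝ × ℝ | p ∈ U ∧ v p = 0} := by
    rw [Metric.isOpen_iff]
    rintro p ⟨hpU, hpv⟩
    obtain ⟨ε, hε, hball⟩ := Metric.isOpen_iff.1 hUopen p hpU
    refine ⟨ε, hε, fun q hq => ⟨hball hq, ?_⟩⟩
    have hconst := (convex_ball p ε).is_const_of_fderivWithin_eq_zero (𝕜 := ℝ) (f := v)
      (fun r hr => ((hvd r (hball hr)).differentiableAt).differentiableWithinAt)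
      (fun r hr => by
        rw [fderivWithin_of_isOpen Metric.isOpen_ball hr]
        exact hA0 r (hball hr))
      hq (Metric.mem_ball_self hε)
    rw [hconst, hpv]
  have hTopen : IsOpen (U ∩ v ⁻¹' ({(0 : ℝ)}ᶜ)) :=
    hv.continuousOn.isOpen_inter_preimage hUopen isOpen_compl_singleton
  have hvzero : ∀ p ∈ U, v p = 0 := by
    by_contra hcon
    push_neg at hcon
    obtain ⟨p₁, hp₁U, hp₁⟩ := hcon
    have hcover : U ⊆ {p : ℝ × ℝ | p ∈ U ∧ v p = 0} ∪ (U ∩ v ⁻¹' ({(0 : ℝ)}ᶜ)) := by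
      intro q hq
      by_cases h : v q = 0
      · exact Or.inl ⟨hq, h⟩
      · exact Or.inr ⟨hq, h⟩
    have h1 : (U ∩ {p : ℝ × ℝ | p ∈ U ∧ v p = 0}).Nonempty :=
      ⟨(x₀, 0), hx₀, hx₀, hvaxis x₀ hx₀⟩
    have h2 : (U ∩ (U ∩ v ⁻¹' ({(0 : ℝ)}ᶜ))).Nonempty := ⟨p₁, hp₁U, hp₁U, hp₁⟩
    obtain ⟨q, -, ⟨-, hq0⟩, -, hqne⟩ :=
      hUconn.isPreconnected _ _ hSopen hTopen hcover h1 h2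
    exact hqne (by simpa using hq0)
  intro p hp
  have hfin : w p + u p = 0 := by
    have := hvzero p hp
    rwa [hvdef] at this
  have hw' : w p = u (p.1, -p.2) := by rw [hwdef]
  rw [← hw']
  linarith
end

section
/- Let a, b, c : ℝ² → ℝ be C¹ functions, let ℜ be a Riemann function for the hyperbolic operator H, let s : ℝ → ℝ be a C¹ strictly decreasing bijection with graph Γ = {(x, s(x)) : x ∈ ℝ}, and let u : ℝ² → ℝ be a C² solution of Hu = u_{xy} + a uₓ + b u_y + c u = 0 on ℝ². Then for every point P = (x₀, y₀) ∈ ℝ², setting M = (s⁻¹(y₀), y₀) and N = (x₀, s(x₀)), one has u(P) = ½ u(M) ℜ(M; P) + ½ u(N) ℜ(N; P) − ∫_{s⁻¹(y₀)}^{x₀} [𝔘(x, s(x)) · s′(x) − 𝔙(x, s(x))] dx, where 𝔘(x, y) = a(x,y) u(x,y) ℜ(x,y; x₀,y₀) + ½[ℜ(x,y; x₀,y₀) u_y(x,y) − ℜ_y(x,y; x₀,y₀) u(x,y)] and 𝔙(x, y) = b(x,y) u(x,y) ℜ(x,y; x₀,y₀) + ½[ℜ(x,y; x₀,y₀) uₓ(x,y)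 − ℜₓ(x,y; x₀,y₀) u(x,y)]. -/
namespace RiemannAux

open MeasureTheory Set intervalIntegral

variable {f g : ℝ × ℝ → ℝ} {p : ℝ × ℝ}

lemma hasDerivAt_pdx_fderiv (hf : DifferentiableAt ℝ f p) :
    HasDerivAt (fun x => f (x, p.2)) (fderiv ℝ f p (1, 0)) p.1 := by
  have h1 : HasDerivAt (fun x : ℝ => (x, p.2)) ((1 : ℝ), (0 : ℝ)) p.1 :=
    (hasDerivAt_id p.1).prodMk (hasDerivAt_const p.1 p.2)
  exact hf.hasFDerivAt.comp_hasDerivAt p.1 h1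

lemma hasDerivAt_pdy_fderiv (hf : DifferentiableAt ℝ f p) :
    HasDerivAt (fun y => f (p.1, y)) (fderiv ℝ f p (0, 1)) p.2 := by
  have h1 : HasDerivAt (fun y : ℝ => (p.1, y)) ((0 : ℝ), (1 : ℝ)) p.2 :=
    (hasDerivAt_const p.2 p.1).prodMk (hasDerivAt_id p.2)
  exact hf.hasFDerivAt.comp_hasDerivAt p.2 h1

lemma pdx_eq (hf : DifferentiableAt ℝ f p) : pdx f p = fderiv ℝ f p (1, 0) :=
  (hasDerivAt_pdx_fderiv hf).deriv

lemma pdy_eq (hf : DifferentiableAt ℝ f p) : pdy f p = fderiv ℝ f p (0, 1) :=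
  (hasDerivAt_pdy_fderiv hf).deriv

lemma hasDerivAt_slice1 (hf : DifferentiableAt ℝ f p) :
    HasDerivAt (fun x => f (x, p.2)) (pdx f p) p.1 := by
  rw [pdx_eq hf]; exact hasDerivAt_pdx_fderiv hf

lemma hasDerivAt_slice2 (hf : DifferentiableAt ℝ f p) :
    HasDerivAt (fun y => f (p.1, y)) (pdy f p) p.2 := by
  rw [pdy_eq hf]; exact hasDerivAt_pdy_fderiv hf

lemma hasDerivAt_slice1' {x y : ℝ} (hf : DifferentiableAt ℝ f (x, y)) :
    HasDerivAt (fun x' => f (x', y)) (pdx f (x, y)) x :=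
  hasDerivAt_slice1 hf

lemma hasDerivAt_slice2' {x y : ℝ} (hf : DifferentiableAt ℝ f (x, y)) :
    HasDerivAt (fun y' => f (x, y')) (pdy f (x, y)) y :=
  hasDerivAt_slice2 hf

lemma contDiff_pdx (hf : ContDiff ℝ 2 f) : ContDiff ℝ 1 (pdx f) := by
  have h : pdx f = fun p => fderiv ℝ f p (1, 0) :=
    funext fun p => pdx_eq (hf.differentiable (by norm_num) p)
  rw [h]
  exact (ContinuousLinearMap.apply ℝ ℝ ((1 : ℝ), (0 : ℝ))).contDiff.comp
    (hf.fderiv_right (by norm_num))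

lemma contDiff_pdy (hf : ContDiff ℝ 2 f) : ContDiff ℝ 1 (pdy f) := by
  have h : pdy f = fun p => fderiv ℝ f p (0, 1) :=
    funext fun p => pdy_eq (hf.differentiable (by norm_num) p)
  rw [h]
  exact (ContinuousLinearMap.apply ℝ ℝ ((0 : ℝ), (1 : ℝ))).contDiff.comp
    (hf.fderiv_right (by norm_num))

lemma continuous_pdx (hf : ContDiff ℝ 1 f) : Continuous (pdx f) := by
  have h : pdx f = fun p => fderiv ℝ f p (1, 0) :=
    funext fun p => pdx_eq (hf.differentiable one_ne_zero p)
  rw [h]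
  exact (hf.continuous_fderiv one_ne_zero).clm_apply continuous_const

lemma continuous_pdy (hf : ContDiff ℝ 1 f) : Continuous (pdy f) := by
  have h : pdy f = fun p => fderiv ℝ f p (0, 1) :=
    funext fun p => pdy_eq (hf.differentiable one_ne_zero p)
  rw [h]
  exact (hf.continuous_fderiv one_ne_zero).clm_apply continuous_const

lemma pdx_pdy_symm (hf : ContDiff ℝ 2 f) (p : ℝ × ℝ) :
    pdx (pdy f) p = pdy (pdx f) p := by
  have hdiff : Differentiable ℝ f := hf.differentiable (by norm_num)
  have hf' : ContDiff ℝ 1 (fderiv ℝ f) := hf.fderiv_right (by norm_num)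
  have h2 : HasFDerivAt (fderiv ℝ f) (fderiv ℝ (fderiv ℝ f) p) p :=
    (hf'.differentiable one_ne_zero p).hasFDerivAt
  have hsymm := second_derivative_symmetric (fun q => (hdiff q).hasFDerivAt) h2
    ((1 : ℝ), (0 : ℝ)) ((0 : ℝ), (1 : ℝ))
  have h3 : ∀ v : ℝ × ℝ, HasFDerivAt (fun q => fderiv ℝ f q v)
      ((ContinuousLinearMap.apply ℝ ℝ v).comp (fderiv ℝ (fderiv ℝ f) p)) p :=
    fun v => (ContinuousLinearMap.apply ℝ ℝ v).hasFDerivAt.comp p h2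
  have e1 : pdy f = fun q => fderiv ℝ f q (0, 1) := funext fun q => pdy_eq (hdiff q)
  have e2 : pdx f = fun q => fderiv ℝ f q (1, 0) := funext fun q => pdx_eq (hdiff q)
  rw [e1, e2, pdx_eq (h3 ((0 : ℝ), (1 : ℝ))).differentiableAt,
    pdy_eq (h3 ((1 : ℝ), (0 : ℝ))).differentiableAt,
    (h3 ((0 : ℝ), (1 : ℝ))).fderiv, (h3 ((1 : ℝ), (0 : ℝ))).fderiv]
  exact hsymm

/-- Fubini for iterated interval integrals over a triangle, ordered case. -/
lemma triangle_swap_le {f : ℝ → ℝ → ℝ} (hf : Continuous fun p : ℝ × ℝ => f p.1 p.2)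
    {a b : ℝ} (hab : a ≤ b) :
    ∫ x in a..b, ∫ t in a..x, f x t = ∫ t in a..b, ∫ x in t..b, f x t := by
  set g : ℝ × ℝ → ℝ := fun p => f p.1 p.2 with hg
  set S : Set (ℝ × ℝ) := {p : ℝ × ℝ | a ≤ p.2 ∧ p.2 ≤ p.1 ∧ p.1 ≤ b} with hSdef
  have hSclosed : IsClosed S :=
    (isClosed_le continuous_const continuous_snd).inter
      ((isClosed_le continuous_snd continuous_fst).inter
        (isClosed_le continuous_fst continuous_const))
  have hSm : MeasurableSet S := hSclosed.measurableSet
  have hsub : S ⊆ Icc a b ×ˢ Icc a b := by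
    rintro ⟨x, t⟩ ⟨h1, h2, h3⟩
    exact ⟨⟨h1.trans h2, h3⟩, h1, h2.trans h3⟩
  have hgint : IntegrableOn g S := by
    have h0 : IntegrableOn g (Icc a b ×ˢ Icc a b) :=
      hf.continuousOn.integrableOn_compact (isCompact_Icc.prod isCompact_Icc)
    exact h0.mono_set hsub
  have hFint : Integrable (S.indicator g) := (integrable_indicator_iff hSm).2 hgint
  have hswap : (∫ x, ∫ t, S.indicator g (x, t)) = ∫ t, ∫ x, S.indicator g (x, t) := by
    apply MeasureTheory.integral_integral_swap (f := fun x t => S.indicator g (x, t))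
    rw [← MeasureTheory.Measure.volume_eq_prod]
    exact hFint
  have hL : (fun x => ∫ t, S.indicator g (x, t)) =
      (Icc a b).indicator (fun x => ∫ t in a..x, f x t) := by
    funext x
    by_cases hx : x ∈ Icc a b
    · have hset : (fun t => S.indicator g (x, t)) = (Icc a x).indicator (fun t => f x t) := by
        funext t
        by_cases ht2 : t ∈ Icc a x
        · rw [Set.indicator_of_mem ht2, Set.indicator_of_mem (show (x, t) ∈ S from ⟨ht2.1, ht2.2, hx.2⟩)]
        · rw [Set.indicator_of_notMem ht2, Set.indicator_of_notMem]
          intro hmem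
          exact ht2 ⟨hmem.1, hmem.2.1⟩
      rw [hset, Set.indicator_of_mem hx, MeasureTheory.integral_indicator measurableSet_Icc,
        integral_Icc_eq_integral_Ioc, ← intervalIntegral.integral_of_le hx.1]
    · rw [Set.indicator_of_notMem hx]
      have hset : (fun t => S.indicator g (x, t)) = fun _ => (0 : ℝ) := by
        funext t
        apply Set.indicator_of_notMem
        intro hmem
        exact hx ⟨hmem.1.trans hmem.2.1, hmem.2.2⟩
      rw [hset, MeasureTheory.integral_zero]
  have hR : (fun t => ∫ x, S.indicator g (x, t)) =
      (Icc a b).indicator (fun t => ∫ x in t..b, f x t) := by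
    funext t
    by_cases ht : t ∈ Icc a b
    · have hset : (fun x => S.indicator g (x, t)) = (Icc t b).indicator (fun x => f x t) := by
        funext x
        by_cases hx : x ∈ Icc t b
        · rw [Set.indicator_of_mem hx, Set.indicator_of_mem (show (x, t) ∈ S from ⟨ht.1, hx.1, hx.2⟩)]
        · rw [Set.indicator_of_notMem hx, Set.indicator_of_notMem]
          intro hmem
          exact hx ⟨hmem.2.1, hmem.2.2⟩
      rw [hset, Set.indicator_of_mem ht, MeasureTheory.integral_indicator measurableSet_Icc,
        integral_Icc_eq_integral_Ioc, ← intervalIntegral.integral_of_le ht.2]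
    · rw [Set.indicator_of_notMem ht]
      have hset : (fun x => S.indicator g (x, t)) = fun _ => (0 : ℝ) := by
        funext x
        apply Set.indicator_of_notMem
        intro hmem
        exact ht ⟨hmem.1, hmem.2.1.trans hmem.2.2⟩
      rw [hset, MeasureTheory.integral_zero]
  rw [hL, hR] at hswap
  rwa [MeasureTheory.integral_indicator measurableSet_Icc, integral_Icc_eq_integral_Ioc,
    ← intervalIntegral.integral_of_le hab, MeasureTheory.integral_indicator measurableSet_Icc,
    integral_Icc_eq_integral_Ioc, ← intervalIntegral.integral_of_le hab] at hswap

/-- Fubini for iterated interval integrals over a triangle, general case. -/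
lemma triangle_swap {f : ℝ → ℝ → ℝ} (hf : Continuous fun p : ℝ × ℝ => f p.1 p.2) (a b : ℝ) :
    ∫ x in a..b, ∫ t in a..x, f x t = ∫ t in a..b, ∫ x in t..b, f x t := by
  rcases le_total a b with hab | hba
  · exact triangle_swap_le hf hab
  · have hf' : Continuous fun p : ℝ × ℝ => f p.2 p.1 :=
      hf.comp (continuous_snd.prodMk continuous_fst)
    have h := triangle_swap_le (f := fun x t => f t x) hf' hba
    have e1 : (∫ x in a..b, ∫ t in a..x, f x t) = ∫ x in b..a, ∫ t in x..a, f x t := by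
      rw [intervalIntegral.integral_symm b a]
      rw [show (∫ x in b..a, ∫ t in a..x, f x t) = ∫ x in b..a, -(∫ t in x..a, f x t) from
        intervalIntegral.integral_congr fun x _ => intervalIntegral.integral_symm x a]
      rw [intervalIntegral.integral_neg, neg_neg]
    have e2 : (∫ t in a..b, ∫ x in t..b, f x t) = ∫ t in b..a, ∫ x in b..t, f x t := by
      rw [intervalIntegral.integral_symm b a]
      rw [show (∫ t in b..a, ∫ x in t..b, f x t) = ∫ t in b..a, -(∫ x in b..t, f x t) from
        intervalIntegral.integral_congr fun t _ => intervalIntegral.integral_symm b t]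
      rw [intervalIntegral.integral_neg, neg_neg]
    rw [e1, e2]
    exact h.symm

/-- The divergence-free identity `∂x U + ∂y V = 0` built from a solution of the
hyperbolic equation and a solution of the adjoint equation. -/
lemma div_free (a b c u Rt : ℝ × ℝ → ℝ)
    (ha : ContDiff ℝ 1 a) (hb : ContDiff ℝ 1 b)
    (hu : ContDiff ℝ 2 u) (hR : ContDiff ℝ 2 Rt)
    (hadj : ∀ q : ℝ × ℝ, pdy (pdx Rt) q - pdx (fun q' => a q' * Rt q') q
      - pdy (fun q' => b q' * Rt q') q + c q * Rt q = 0)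
    (hueq : ∀ q : ℝ × ℝ, pdy (pdx u) q + a q * pdx u q + b q * pdy u q + c q * u q = 0)
    (q : ℝ × ℝ) :
    pdx (fun p => a p * u p * Rt p + (1 / 2) * (Rt p * pdy u p - pdy Rt p * u p)) q
      + pdy (fun p => b p * u p * Rt p + (1 / 2) * (Rt p * pdx u p - pdx Rt p * u p)) q = 0 := by
  obtain ⟨x, y⟩ := q
  have da : DifferentiableAt ℝ a (x, y) := ha.differentiable one_ne_zero _
  have dbb : DifferentiableAt ℝ b (x, y) := hb.differentiable one_ne_zero _
  have du : DifferentiableAt ℝ u (x, y) := hu.differentiable (by norm_num) _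
  have dR : DifferentiableAt ℝ Rt (x, y) := hR.differentiable (by norm_num) _
  have dux : DifferentiableAt ℝ (pdx u) (x, y) := (contDiff_pdx hu).differentiable one_ne_zero _
  have duy : DifferentiableAt ℝ (pdy u) (x, y) := (contDiff_pdy hu).differentiable one_ne_zero _
  have dRx : DifferentiableAt ℝ (pdx Rt) (x, y) := (contDiff_pdx hR).differentiable one_ne_zero _
  have dRy : DifferentiableAt ℝ (pdy Rt) (x, y) := (contDiff_pdy hR).differentiable one_ne_zero _
  have hXU : pdx (fun p => a p * u p * Rt p + (1 / 2) * (Rt p * pdy u p - pdy Rt p * u p)) (x, y)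
      = ((pdx a (x, y) * u (x, y) + a (x, y) * pdx u (x, y)) * Rt (x, y)
          + a (x, y) * u (x, y) * pdx Rt (x, y))
        + (1 / 2) * ((pdx Rt (x, y) * pdy u (x, y) + Rt (x, y) * pdx (pdy u) (x, y))
            - (pdx (pdy Rt) (x, y) * u (x, y) + pdy Rt (x, y) * pdx u (x, y))) :=
    by
      have t1 := ((hasDerivAt_slice1' da).mul (hasDerivAt_slice1' du)).mul (hasDerivAt_slice1' dR)
      have t2 := ((hasDerivAt_slice1' dR).mul (hasDerivAt_slice1' duy)).sub
        ((hasDerivAt_slice1' dRy).mul (hasDerivAt_slice1' du))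
      exact (t1.add (HasDerivAt.const_mul (1 / 2 : ℝ) t2)).deriv
  have hYV : pdy (fun p => b p * u p * Rt p + (1 / 2) * (Rt p * pdx u p - pdx Rt p * u p)) (x, y)
      = ((pdy b (x, y) * u (x, y) + b (x, y) * pdy u (x, y)) * Rt (x, y)
          + b (x, y) * u (x, y) * pdy Rt (x, y))
        + (1 / 2) * ((pdy Rt (x, y) * pdx u (x, y) + Rt (x, y) * pdy (pdx u) (x, y))
            - (pdy (pdx Rt) (x, y) * u (x, y) + pdx Rt (x, y) * pdy u (x, y))) :=
    by
      have t1 := ((hasDerivAt_slice2' dbb).mul (hasDerivAt_slice2' du)).mul (hasDerivAt_slice2' dR)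
      have t2 := ((hasDerivAt_slice2' dR).mul (hasDerivAt_slice2' dux)).sub
        ((hasDerivAt_slice2' dRx).mul (hasDerivAt_slice2' du))
      exact (t1.add (HasDerivAt.const_mul (1 / 2 : ℝ) t2)).deriv
  have e1 : pdx (fun q' => a q' * Rt q') (x, y)
      = pdx a (x, y) * Rt (x, y) + a (x, y) * pdx Rt (x, y) :=
    ((hasDerivAt_slice1' da).mul (hasDerivAt_slice1' dR)).deriv
  have e2 : pdy (fun q' => b q' * Rt q') (x, y)
      = pdy b (x, y) * Rt (x, y) + b (x, y) * pdy Rt (x, y) :=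
    ((hasDerivAt_slice2' dbb).mul (hasDerivAt_slice2' dR)).deriv
  have hadj' := hadj (x, y)
  rw [e1, e2] at hadj'
  have hueq' := hueq (x, y)
  have symmu : pdx (pdy u) (x, y) = pdy (pdx u) (x, y) := pdx_pdy_symm hu (x, y)
  have symmR : pdx (pdy Rt) (x, y) = pdy (pdx Rt) (x, y) := pdx_pdy_symm hR (x, y)
  rw [hXU, hYV, symmu, symmR]
  linear_combination (-(u (x, y))) * hadj' + Rt (x, y) * hueq'

/-- Green-type identity for a divergence-free field along a curve. -/
lemma green_aux (U V : ℝ × ℝ → ℝ) (hU : ContDiff ℝ 1 U) (hV : ContDiff ℝ 1 V)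
    (hdiv : ∀ q : ℝ × ℝ, pdx U q + pdy V q = 0)
    (s : ℝ → ℝ) (hs : ContDiff ℝ 1 s)
    (x₀ y₀ m : ℝ) (hm : s m = y₀)
    (w v : ℝ → ℝ)
    (hw : ∀ y : ℝ, HasDerivAt w (U (x₀, y)) y)
    (hv : ∀ x : ℝ, HasDerivAt v (V (x, y₀)) x) :
    w y₀ + v x₀ = w (s x₀) + v m
      - ∫ x in m..x₀, (U (x, s x) * deriv s x - V (x, s x)) := by
  have cs : Continuous s := hs.continuous
  have cs' : Continuous (deriv s) := hs.continuous_deriv le_rfl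
  have hsd : ∀ t : ℝ, HasDerivAt s (deriv s t) t := fun t =>
    (hs.differentiable one_ne_zero t).hasDerivAt
  have cU : Continuous U := hU.continuous
  have cV : Continuous V := hV.continuous
  have cUx : Continuous (pdx U) := continuous_pdx hU
  have dU : Differentiable ℝ U := hU.differentiable one_ne_zero
  have dV : Differentiable ℝ V := hV.differentiable one_ne_zero
  have eq1 : ∀ x : ℝ, (∫ t in x..m, pdx U (x, s t) * deriv s t) = V (x, s x) - V (x, y₀) := by
    intro x
    have hder : ∀ t ∈ uIcc x m,
        HasDerivAt (fun t => -V (x, s t)) (pdx U (x, s t) * deriv s t) t := by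
      intro t _
      have h1 : HasDerivAt (fun t => V (x, s t)) (pdy V (x, s t) * deriv s t) t :=
        (hasDerivAt_slice2' (dV (x, s t))).comp t (hsd t)
      have h4 : pdx U (x, s t) = -pdy V (x, s t) := by linarith [hdiv (x, s t)]
      rw [h4, neg_mul]
      exact h1.neg
    have hint : IntervalIntegrable (fun t => pdx U (x, s t) * deriv s t) volume x m :=
      ((cUx.comp (continuous_const.prodMk cs)).mul cs').intervalIntegrable x m
    have h3 := intervalIntegral.integral_eq_sub_of_hasDerivAt hder hint
    simp only [hm] at h3
    rw [h3]; ring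
  have cinner : Continuous fun p : ℝ × ℝ => pdx U (p.1, s p.2) * deriv s p.2 :=
    (cUx.comp (continuous_fst.prodMk (cs.comp continuous_snd))).mul (cs'.comp continuous_snd)
  have eq2 : (∫ x in m..x₀, (V (x, s x) - V (x, y₀)))
      = ∫ x in m..x₀, ∫ t in x..m, pdx U (x, s t) * deriv s t :=
    (intervalIntegral.integral_congr fun x _ => eq1 x).symm
  have eq3 : (∫ x in m..x₀, ∫ t in x..m, pdx U (x, s t) * deriv s t)
      = -∫ x in m..x₀, ∫ t in m..x, pdx U (x, s t) * deriv s t := by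
    rw [← intervalIntegral.integral_neg]
    exact intervalIntegral.integral_congr fun x _ => intervalIntegral.integral_symm m x
  have swap : (∫ x in m..x₀, ∫ t in m..x, pdx U (x, s t) * deriv s t)
      = ∫ t in m..x₀, ∫ x in t..x₀, pdx U (x, s t) * deriv s t :=
    triangle_swap (f := fun x t => pdx U (x, s t) * deriv s t) cinner m x₀
  have eq4 : ∀ t : ℝ, (∫ x in t..x₀, pdx U (x, s t) * deriv s t)
      = U (x₀, s t) * deriv s t - U (t, s t) * deriv s t := fun t =>
    intervalIntegral.integral_eq_sub_of_hasDerivAt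
      (f := fun x => U (x, s t) * deriv s t)
      (fun x _ => (hasDerivAt_slice1' (dU (x, s t))).mul_const (deriv s t))
      (((cUx.comp (continuous_id.prodMk continuous_const)).mul
        continuous_const).intervalIntegrable t x₀)
  have eq5 : (∫ t in m..x₀, U (x₀, s t) * deriv s t) = w (s x₀) - w y₀ := by
    have h := intervalIntegral.integral_eq_sub_of_hasDerivAt
      (f := fun t => w (s t)) (f' := fun t => U (x₀, s t) * deriv s t) (a := m) (b := x₀)
      (fun t _ => (hw (s t)).comp t (hsd t))
      (((cU.comp (continuous_const.prodMk cs)).mul cs').intervalIntegrable m x₀)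
    simp only [hm] at h
    exact h
  have eq6 : (∫ x in m..x₀, V (x, y₀)) = v x₀ - v m :=
    intervalIntegral.integral_eq_sub_of_hasDerivAt (fun x _ => hv x)
      ((cV.comp (continuous_id.prodMk continuous_const)).intervalIntegrable m x₀)
  have i1 : IntervalIntegrable (fun t => U (x₀, s t) * deriv s t) volume m x₀ :=
    ((cU.comp (continuous_const.prodMk cs)).mul cs').intervalIntegrable m x₀
  have i2 : IntervalIntegrable (fun t => U (t, s t) * deriv s t) volume m x₀ :=
    ((cU.comp (continuous_id.prodMk cs)).mul cs').intervalIntegrable m x₀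
  have i3 : IntervalIntegrable (fun x => V (x, s x)) volume m x₀ :=
    (cV.comp (continuous_id.prodMk cs)).intervalIntegrable m x₀
  have i4 : IntervalIntegrable (fun x => V (x, y₀)) volume m x₀ :=
    (cV.comp (continuous_id.prodMk continuous_const)).intervalIntegrable m x₀
  have split1 : (∫ t in m..x₀, (U (x₀, s t) * deriv s t - U (t, s t) * deriv s t))
      = (∫ t in m..x₀, U (x₀, s t) * deriv s t) - ∫ t in m..x₀, U (t, s t) * deriv s t :=
    intervalIntegral.integral_sub i1 i2
  have split2 : (∫ x in m..x₀, (V (x, s x) - V (x, y₀)))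
      = (∫ x in m..x₀, V (x, s x)) - ∫ x in m..x₀, V (x, y₀) :=
    intervalIntegral.integral_sub i3 i4
  have split3 : (∫ x in m..x₀, (U (x, s x) * deriv s x - V (x, s x)))
      = (∫ x in m..x₀, U (x, s x) * deriv s x) - ∫ x in m..x₀, V (x, s x) :=
    intervalIntegral.integral_sub i2 i3
  have main : (∫ x in m..x₀, V (x, s x)) - (v x₀ - v m)
      = -((w (s x₀) - w y₀) - ∫ t in m..x₀, U (t, s t) * deriv s t) := by
    calc (∫ x in m..x₀, V (x, s x)) - (v x₀ - v m)
        = ∫ x in m..x₀, (V (x, s x) - V (x, y₀)) := by rw [split2, eq6]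
      _ = ∫ x in m..x₀, ∫ t in x..m, pdx U (x, s t) * deriv s t := eq2
      _ = -∫ x in m..x₀, ∫ t in m..x, pdx U (x, s t) * deriv s t := eq3
      _ = -∫ t in m..x₀, ∫ x in t..x₀, pdx U (x, s t) * deriv s t := by rw [swap]
      _ = -∫ t in m..x₀, (U (x₀, s t) * deriv s t - U (t, s t) * deriv s t) := by
            rw [intervalIntegral.integral_congr
              (g := fun t => U (x₀, s t) * deriv s t - U (t, s t) * deriv s t)
              fun t _ => eq4 t]
      _ = -((w (s x₀) - w y₀) - ∫ t in m..x₀, U (t, s t) * deriv s t) := by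
            rw [split1, eq5]
  rw [split3]
  linarith [main]

end RiemannAux

open RiemannAux in
/-- Riemann's representation formula (Riemann's lemma) for solutions of the hyperbolic
equation `u_{xy} + a u_x + b u_y + c u = 0` in terms of data on the non-characteristic
curve `Γ = {(x, s(x))}`.  Here `R q P` is the Riemann function `ℜ(q; P)` of `H`. -/
theorem riemann_representation
    (a b c : ℝ × ℝ → ℝ)
    (ha : ContDiff ℝ 1 a) (hb : ContDiff ℝ 1 b) (hc : ContDiff ℝ 1 c)
    (R : ℝ × ℝ → ℝ × ℝ → ℝ)
    (hRsmooth : ∀ P : ℝ × ℝ, ContDiff ℝ 2 (fun q => R q P))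
    -- (i) the adjoint equation `H* ℜ = 0` in the variables `q = (x, y)`
    (hRadj : ∀ P q : ℝ × ℝ,
      pdy (pdx (fun q' => R q' P)) q
        - pdx (fun q' => a q' * R q' P) q
        - pdy (fun q' => b q' * R q' P) q
        + c q * R q P = 0)
    -- (ii) Goursat data on the vertical characteristic `x = x₀`
    (hRvert : ∀ P : ℝ × ℝ, ∀ y : ℝ,
      R (P.1, y) P = Real.exp (∫ τ in P.2..y, a (P.1, τ)))
    -- (iii) Goursat data on the horizontal characteristic `y = y₀`
    (hRhoriz : ∀ P : ℝ × ℝ, ∀ x : ℝ,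
      R (x, P.2) P = Real.exp (∫ t in P.1..x, b (t, P.2)))
    (s : ℝ → ℝ) (hs : ContDiff ℝ 1 s) (hsdec : StrictAnti s)
    (hsbij : Function.Bijective s)
    (u : ℝ × ℝ → ℝ) (hu : ContDiff ℝ 2 u)
    (hueq : ∀ q : ℝ × ℝ,
      pdy (pdx u) q + a q * pdx u q + b q * pdy u q + c q * u q = 0) :
    ∀ x₀ y₀ : ℝ,
      u (x₀, y₀) =
        (1 / 2) * u (Function.invFun s y₀, y₀) * R (Function.invFun s y₀, y₀) (x₀, y₀)
        + (1 / 2) * u (x₀, s x₀) * R (x₀, s x₀) (x₀, y₀)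
        - ∫ x in (Function.invFun s y₀)..x₀,
            ((a (x, s x) * u (x, s x) * R (x, s x) (x₀, y₀)
                + (1 / 2) * (R (x, s x) (x₀, y₀) * pdy u (x, s x)
                    - pdy (fun q => R q (x₀, y₀)) (x, s x) * u (x, s x))) * deriv s x
              - (b (x, s x) * u (x, s x) * R (x, s x) (x₀, y₀)
                + (1 / 2) * (R (x, s x) (x₀, y₀) * pdx u (x, s x)
                    - pdx (fun q => R q (x₀, y₀)) (x, s x) * u (x, s x)))) := by
  intro x₀ y₀
  have hm : s (Function.invFun s y₀) = y₀ := Function.invFun_eq (hsbij.surjective y₀)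
  have hRt2 : ContDiff ℝ 2 (fun q => R q (x₀, y₀)) := hRsmooth (x₀, y₀)
  have cA : Continuous a := ha.continuous
  have cB : Continuous b := hb.continuous
  have du2 : Differentiable ℝ u := hu.differentiable (by norm_num)
  have dR2 : Differentiable ℝ (fun q => R q (x₀, y₀)) := hRt2.differentiable (by norm_num)
  have hu1 : ContDiff ℝ 1 u := hu.of_le (by norm_num)
  have hR1 : ContDiff ℝ 1 (fun q => R q (x₀, y₀)) := hRt2.of_le (by norm_num)
  -- smoothness of the field
  have hU : ContDiff ℝ 1 (fun p => a p * u p * R p (x₀, y₀)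
      + (1 / 2) * (R p (x₀, y₀) * pdy u p - pdy (fun q => R q (x₀, y₀)) p * u p)) :=
    ((ha.mul hu1).mul hR1).add
      (contDiff_const.mul ((hR1.mul (contDiff_pdy hu)).sub ((contDiff_pdy hRt2).mul hu1)))
  have hV : ContDiff ℝ 1 (fun p => b p * u p * R p (x₀, y₀)
      + (1 / 2) * (R p (x₀, y₀) * pdx u p - pdx (fun q => R q (x₀, y₀)) p * u p)) :=
    ((hb.mul hu1).mul hR1).add
      (contDiff_const.mul ((hR1.mul (contDiff_pdx hu)).sub ((contDiff_pdx hRt2).mul hu1)))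
  have hdiv := div_free a b c u (fun q => R q (x₀, y₀)) ha hb hu hRt2
    (fun q => hRadj (x₀, y₀) q) hueq
  -- Goursat data
  have hRv : ∀ y : ℝ, R (x₀, y) (x₀, y₀) = Real.exp (∫ τ in y₀..y, a (x₀, τ)) :=
    fun y => hRvert (x₀, y₀) y
  have hRh : ∀ x : ℝ, R (x, y₀) (x₀, y₀) = Real.exp (∫ t in x₀..x, b (t, y₀)) :=
    fun x => hRhoriz (x₀, y₀) x
  have caslice : Continuous fun τ => a (x₀, τ) := cA.comp (continuous_const.prodMk continuous_id)
  have cbslice : Continuous fun t => b (t, y₀) := cB.comp (continuous_id.prodMk continuous_const)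
  have hpdyR : ∀ y : ℝ, pdy (fun q => R q (x₀, y₀)) (x₀, y)
      = a (x₀, y) * R (x₀, y) (x₀, y₀) := by
    intro y
    have hI : HasDerivAt (fun z => ∫ τ in y₀..z, a (x₀, τ)) (a (x₀, y)) y :=
      intervalIntegral.integral_hasDerivAt_right (caslice.intervalIntegrable y₀ y)
        (caslice.stronglyMeasurable.stronglyMeasurableAtFilter)
        caslice.continuousAt
    have hE : HasDerivAt (fun z : ℝ => Real.exp (∫ τ in y₀..z, a (x₀, τ)))
        (Real.exp (∫ τ in y₀..y, a (x₀, τ)) * a (x₀, y)) y := hI.exp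
    have hfun : (fun z : ℝ => R (x₀, z) (x₀, y₀))
        = fun z => Real.exp (∫ τ in y₀..z, a (x₀, τ)) := funext hRv
    have hunf : pdy (fun q => R q (x₀, y₀)) (x₀, y) = deriv (fun z => R (x₀, z) (x₀, y₀)) y := rfl
    rw [hunf, hfun, hE.deriv, ← hRv y]; ring
  have hpdxR : ∀ x : ℝ, pdx (fun q => R q (x₀, y₀)) (x, y₀)
      = b (x, y₀) * R (x, y₀) (x₀, y₀) := by
    intro x
    have hI : HasDerivAt (fun z => ∫ t in x₀..z, b (t, y₀)) (b (x, y₀)) x :=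
      intervalIntegral.integral_hasDerivAt_right (cbslice.intervalIntegrable x₀ x)
        (cbslice.stronglyMeasurable.stronglyMeasurableAtFilter)
        cbslice.continuousAt
    have hE : HasDerivAt (fun z : ℝ => Real.exp (∫ t in x₀..z, b (t, y₀)))
        (Real.exp (∫ t in x₀..x, b (t, y₀)) * b (x, y₀)) x := hI.exp
    have hfun : (fun z : ℝ => R (z, y₀) (x₀, y₀))
        = fun z => Real.exp (∫ t in x₀..z, b (t, y₀)) := funext hRh
    have hunf : pdx (fun q => R q (x₀, y₀)) (x, y₀) = deriv (fun z => R (z, y₀) (x₀, y₀)) x := rfl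
    rw [hunf, hfun, hE.deriv, ← hRh x]; ring
  -- endpoint antiderivatives
  have hw : ∀ y : ℝ, HasDerivAt (fun y' => (1 / 2) * (u (x₀, y') * R (x₀, y') (x₀, y₀)))
      (a (x₀, y) * u (x₀, y) * R (x₀, y) (x₀, y₀)
        + (1 / 2) * (R (x₀, y) (x₀, y₀) * pdy u (x₀, y)
          - pdy (fun q => R q (x₀, y₀)) (x₀, y) * u (x₀, y))) y := by
    intro y
    have h1 : HasDerivAt (fun y' => u (x₀, y')) (pdy u (x₀, y)) y :=
      hasDerivAt_slice2' (du2 (x₀, y))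
    have h2 : HasDerivAt (fun y' => R (x₀, y') (x₀, y₀))
        (pdy (fun q => R q (x₀, y₀)) (x₀, y)) y := hasDerivAt_slice2' (dR2 (x₀, y))
    have h3 := HasDerivAt.const_mul (1 / 2 : ℝ) (h1.mul h2)
    have e : (1 / 2 : ℝ) * (pdy u (x₀, y) * R (x₀, y) (x₀, y₀)
          + u (x₀, y) * pdy (fun q => R q (x₀, y₀)) (x₀, y))
        = a (x₀, y) * u (x₀, y) * R (x₀, y) (x₀, y₀)
          + (1 / 2) * (R (x₀, y) (x₀, y₀) * pdy u (x₀, y)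
            - pdy (fun q => R q (x₀, y₀)) (x₀, y) * u (x₀, y)) := by
      rw [hpdyR y]; ring
    rw [← e]
    exact h3
  have hv : ∀ x : ℝ, HasDerivAt (fun x' => (1 / 2) * (u (x', y₀) * R (x', y₀) (x₀, y₀)))
      (b (x, y₀) * u (x, y₀) * R (x, y₀) (x₀, y₀)
        + (1 / 2) * (R (x, y₀) (x₀, y₀) * pdx u (x, y₀)
          - pdx (fun q => R q (x₀, y₀)) (x, y₀) * u (x, y₀))) x := by
    intro x
    have h1 : HasDerivAt (fun x' => u (x', y₀)) (pdx u (x, y₀)) x :=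
      hasDerivAt_slice1' (du2 (x, y₀))
    have h2 : HasDerivAt (fun x' => R (x', y₀) (x₀, y₀))
        (pdx (fun q => R q (x₀, y₀)) (x, y₀)) x := hasDerivAt_slice1' (dR2 (x, y₀))
    have h3 := HasDerivAt.const_mul (1 / 2 : ℝ) (h1.mul h2)
    have e : (1 / 2 : ℝ) * (pdx u (x, y₀) * R (x, y₀) (x₀, y₀)
          + u (x, y₀) * pdx (fun q => R q (x₀, y₀)) (x, y₀))
        = b (x, y₀) * u (x, y₀) * R (x, y₀) (x₀, y₀)
          + (1 / 2) * (R (x, y₀) (x₀, y₀) * pdx u (x, y₀)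
            - pdx (fun q => R q (x₀, y₀)) (x, y₀) * u (x, y₀)) := by
      rw [hpdxR x]; ring
    rw [← e]
    exact h3
  have key := green_aux
    (fun p => a p * u p * R p (x₀, y₀)
      + (1 / 2) * (R p (x₀, y₀) * pdy u p - pdy (fun q => R q (x₀, y₀)) p * u p))
    (fun p => b p * u p * R p (x₀, y₀)
      + (1 / 2) * (R p (x₀, y₀) * pdx u p - pdx (fun q => R q (x₀, y₀)) p * u p))
    hU hV hdiv s hs x₀ y₀ (Function.invFun s y₀) hm
    (fun y' => (1 / 2) * (u (x₀, y') * R (x₀, y') (x₀, y₀)))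
    (fun x' => (1 / 2) * (u (x', y₀) * R (x', y₀) (x₀, y₀)))
    hw hv
  have hRone : R (x₀, y₀) (x₀, y₀) = 1 := by
    have h := hRv y₀
    rwa [intervalIntegral.integral_same, Real.exp_zero] at h
  rw [hRone] at key
  linarith [key]
end

section
/- Let s : ℝ → ℝ be a bijection and let u : ℝ² → ℝ be a C² function with mixed partial derivative ∂²u/∂x∂y = 0 at every point of ℝ² and with u(x, s(x)) = 0 for all x ∈ ℝ. Then for every (x₀, y₀) ∈ ℝ², u(x₀, y₀) = −u(s⁻¹(y₀), s(x₀)). -/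
section aux

variable {u : ℝ × ℝ → ℝ}

lemma hasDerivAt_fst (hu : ContDiff ℝ 2 u) (x y : ℝ) :
    HasDerivAt (fun t : ℝ => u (t, y)) (fderiv ℝ u (x, y) (1, 0)) x := by
  have h1 : HasDerivAt (fun t : ℝ => ((t, y) : ℝ × ℝ)) ((1 : ℝ), (0 : ℝ)) x :=
    (hasDerivAt_id x).prodMk (hasDerivAt_const x y)
  exact ((hu.differentiable (by norm_num)).differentiableAt.hasFDerivAt).comp_hasDerivAt x h1

lemma hasDerivAt_snd (hu : ContDiff ℝ 2 u) (x y : ℝ) :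
    HasDerivAt (fun t : ℝ => u (x, t)) (fderiv ℝ u (x, y) (0, 1)) y := by
  have h1 : HasDerivAt (fun t : ℝ => ((x, t) : ℝ × ℝ)) ((0 : ℝ), (1 : ℝ)) y :=
    (hasDerivAt_const y x).prodMk (hasDerivAt_id y)
  exact ((hu.differentiable (by norm_num)).differentiableAt.hasFDerivAt).comp_hasDerivAt y h1

lemma hasDerivAt_fderiv_fst (hu : ContDiff ℝ 2 u) (x y : ℝ) :
    HasDerivAt (fun t : ℝ => fderiv ℝ u (t, y))
      (fderiv ℝ (fderiv ℝ u) (x, y) (1, 0)) x := by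
  have hdf : Differentiable ℝ (fderiv ℝ u) :=
    (hu.fderiv_right (m := 1) (by norm_num)).differentiable one_ne_zero
  have h1 : HasDerivAt (fun t : ℝ => ((t, y) : ℝ × ℝ)) ((1 : ℝ), (0 : ℝ)) x :=
    (hasDerivAt_id x).prodMk (hasDerivAt_const x y)
  exact (hdf.differentiableAt.hasFDerivAt).comp_hasDerivAt x h1

lemma hasDerivAt_fderiv_snd (hu : ContDiff ℝ 2 u) (x y : ℝ) :
    HasDerivAt (fun t : ℝ => fderiv ℝ u (x, t))
      (fderiv ℝ (fderiv ℝ u) (x, y) (0, 1)) y := by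
  have hdf : Differentiable ℝ (fderiv ℝ u) :=
    (hu.fderiv_right (m := 1) (by norm_num)).differentiable one_ne_zero
  have h1 : HasDerivAt (fun t : ℝ => ((x, t) : ℝ × ℝ)) ((0 : ℝ), (1 : ℝ)) y :=
    (hasDerivAt_const y x).prodMk (hasDerivAt_id y)
  exact (hdf.differentiableAt.hasFDerivAt).comp_hasDerivAt y h1

end aux

/-- Point-to-point reflection law for the wave equation in characteristic coordinates
(`u_{xy} = 0`) with Dirichlet condition on the curve `Γ = {(x, s(x))}`. -/
theorem wave_point_to_point_reflection
    (s : ℝ → ℝ) (hsbij : Function.Bijective s)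
    (u : ℝ × ℝ → ℝ) (hu : ContDiff ℝ 2 u)
    (hwave : ∀ p : ℝ × ℝ, pdx (pdy u) p = 0)
    (huΓ : ∀ x : ℝ, u (x, s x) = 0) :
    ∀ x₀ y₀ : ℝ, u (x₀, y₀) = -u (Function.invFun s y₀, s x₀) := by
  have hdf : Differentiable ℝ (fderiv ℝ u) :=
    (hu.fderiv_right (m := 1) (by norm_num)).differentiable one_ne_zero
  -- pdy u as fderiv
  have hpdy : ∀ p : ℝ × ℝ, pdy u p = fderiv ℝ u p (0, 1) := fun p =>
    (hasDerivAt_snd hu p.1 p.2).deriv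
  -- the hypothesis gives f''(p)(1,0)(0,1) = 0
  have hmix : ∀ p : ℝ × ℝ, fderiv ℝ (fderiv ℝ u) p (1, 0) (0, 1) = 0 := by
    intro p
    have h1 : HasDerivAt (fun t : ℝ => fderiv ℝ u (t, p.2) (0, 1))
        (fderiv ℝ (fderiv ℝ u) p (1, 0) (0, 1)) p.1 := by
      have := (hasDerivAt_fderiv_fst hu p.1 p.2).clm_apply
        (hasDerivAt_const p.1 ((0 : ℝ), (1 : ℝ)))
      simpa using this
    have h2 : pdx (pdy u) p = fderiv ℝ (fderiv ℝ u) p (1, 0) (0, 1) := by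
      have heq : (fun t : ℝ => pdy u (t, p.2)) =
          fun t : ℝ => fderiv ℝ u (t, p.2) (0, 1) := by
        funext t; exact hpdy (t, p.2)
      unfold pdx
      rw [show (fun t : ℝ => pdy u (t, p.2)) = _ from heq]
      exact h1.deriv
    rw [← h2]; exact hwave p
  -- by symmetry, f''(p)(0,1)(1,0) = 0
  have hmix' : ∀ p : ℝ × ℝ, fderiv ℝ (fderiv ℝ u) p (0, 1) (1, 0) = 0 := by
    intro p
    have := second_derivative_symmetric (f := u) (f' := fderiv ℝ u)
      (f'' := fderiv ℝ (fderiv ℝ u) p) (x := p)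
      (fun q => ((hu.differentiable (by norm_num)) q).hasFDerivAt)
      (hdf p).hasFDerivAt ((0 : ℝ), (1 : ℝ)) ((1 : ℝ), (0 : ℝ))
    rw [this]; exact hmix p
  -- step 1: y ↦ fderiv u (x, y) (1,0) is constant
  have hstep1 : ∀ x a b : ℝ, fderiv ℝ u (x, a) (1, 0) = fderiv ℝ u (x, b) (1, 0) := by
    intro x a b
    have hd : ∀ t : ℝ, HasDerivAt (fun y : ℝ => fderiv ℝ u (x, y) (1, 0)) 0 t := by
      intro t
      have := (hasDerivAt_fderiv_snd hu x t).clm_apply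
        (hasDerivAt_const t ((1 : ℝ), (0 : ℝ)))
      simpa [hmix' (x, t)] using this
    have := is_const_of_deriv_eq_zero (f := fun y : ℝ => fderiv ℝ u (x, y) (1, 0))
      (fun t => (hd t).differentiableAt) (fun t => (hd t).deriv) a b
    exact this
  -- step 2: x ↦ u (x, a) - u (x, b) is constant
  have hstep2 : ∀ a b x₀ x₁ : ℝ, u (x₀, a) - u (x₀, b) = u (x₁, a) - u (x₁, b) := by
    intro a b x₀ x₁
    have hd : ∀ t : ℝ, HasDerivAt (fun x : ℝ => u (x, a) - u (x, b)) 0 t := by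
      intro t
      have := (hasDerivAt_fst hu t a).sub (hasDerivAt_fst hu t b)
      rw [hstep1 t a b, sub_self] at this; exact this
    exact is_const_of_deriv_eq_zero (fun t => (hd t).differentiableAt)
      (fun t => (hd t).deriv) x₀ x₁
  intro x₀ y₀
  set x₁ := Function.invFun s y₀ with hx₁
  have hsx₁ : s x₁ = y₀ := Function.invFun_eq (hsbij.2 y₀)
  have := hstep2 y₀ (s x₀) x₀ x₁
  rw [huΓ x₀] at this
  rw [← hsx₁] at this
  rw [huΓ x₁] at this
  rw [hsx₁] at this
  linarith
end

section
/- Let s : ℝ → ℝ be a bijection and let u : ℝ² → ℝ be a C² function with mixed partial derivative ∂²u/∂x∂y = 0 at every point of ℝ² and with u(x, s(x)) = 0 for all x ∈ ℝ. Then for every (x₀, y₀) ∈ ℝ², every integer m ≥ 1, and every finite sequence t₀, t₁, …, t_m of real numbers satisfying s(t₀) = y₀ and t_m = x₀, one has u(x₀, y₀) = −Σ_{k=1}^{m} u(t_{k−1}, s(t_k)). -/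
/-- Point-to-finite-set reflection law for the wave equation in characteristic
coordinates (`u_{xy} = 0`) with Dirichlet condition on the curve `Γ = {(x, s(x))}`:
`u(x₀, y₀) = -∑_{k=1}^{m} u(t_{k-1}, s(t_k))` for any staircase data `t₀, …, t_m`
with `s(t₀) = y₀` and `t_m = x₀`. -/
theorem wave_point_to_finite_set_reflection
    (s : ℝ → ℝ) (hsbij : Function.Bijective s)
    (u : ℝ × ℝ → ℝ) (hu : ContDiff ℝ 2 u)
    (hwave : ∀ p : ℝ × ℝ, pdx (pdy u) p = 0)
    (huΓ : ∀ x : ℝ, u (x, s x) = 0) :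
    ∀ x₀ y₀ : ℝ, ∀ m : ℕ, 1 ≤ m → ∀ t : ℕ → ℝ, s (t 0) = y₀ → t m = x₀ →
      u (x₀, y₀) = -∑ k ∈ Finset.range m, u (t k, s (t (k + 1))) := by
  have hudiff : Differentiable ℝ u := hu.differentiable (by norm_num)
  have hder : ∀ p : ℝ × ℝ, HasDerivAt (fun y => u (p.1, y)) (fderiv ℝ u p ((0 : ℝ), (1 : ℝ))) p.2 := by
    intro p
    have h1 : HasDerivAt (fun y : ℝ => (p.1, y)) ((0 : ℝ), (1 : ℝ)) p.2 :=
      (hasDerivAt_const _ _).prodMk (hasDerivAt_id _)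
    have h2 : HasFDerivAt u (fderiv ℝ u p) (p.1, p.2) := by
      simpa using (hudiff p).hasFDerivAt
    exact h2.comp_hasDerivAt p.2 h1
  have hpdy : ∀ p : ℝ × ℝ, pdy u p = fderiv ℝ u p ((0 : ℝ), (1 : ℝ)) := fun p => (hder p).deriv
  have hfd : ContDiff ℝ 1 (fun p => fderiv ℝ u p) := hu.fderiv_right (by norm_num)
  have hconstx : ∀ y a c : ℝ, pdy u (a, y) = pdy u (c, y) := by
    intro y a c
    have hdiff : Differentiable ℝ (fun x : ℝ => pdy u (x, y)) := by
      have h : Differentiable ℝ (fun x : ℝ => (fderiv ℝ u (x, y)) ((0 : ℝ), (1 : ℝ))) := by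
        apply Differentiable.clm_apply
        · exact (hfd.differentiable one_ne_zero).comp (differentiable_id.prodMk (differentiable_const y))
        · exact differentiable_const _
      simpa only [hpdy] using h
    have hz : ∀ x : ℝ, deriv (fun x : ℝ => pdy u (x, y)) x = 0 := fun x => hwave (x, y)
    exact is_const_of_deriv_eq_zero hdiff hz a c
  have hrect : ∀ a c b d : ℝ, u (a, b) + u (c, d) = u (a, d) + u (c, b) := by
    intro a c b d
    have hda : Differentiable ℝ (fun y => u (a, y)) :=
      hudiff.comp ((differentiable_const a).prodMk differentiable_id)
    have hdc : Differentiable ℝ (fun y => u (c, y)) :=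
      hudiff.comp ((differentiable_const c).prodMk differentiable_id)
    have hF : Differentiable ℝ (fun y => u (a, y) - u (c, y)) := hda.sub hdc
    have hz : ∀ y : ℝ, deriv (fun y => u (a, y) - u (c, y)) y = 0 := by
      intro y
      rw [deriv_fun_sub (hda y) (hdc y)]
      rw [show deriv (fun y' => u (a, y')) y = pdy u (a, y) from rfl,
        show deriv (fun y' => u (c, y')) y = pdy u (c, y) from rfl, hconstx y a c, sub_self]
    have h := is_const_of_deriv_eq_zero hF hz b d
    linarith
  intro x₀ y₀ m hm t ht0 htm
  have key : ∀ k : ℕ, u (t k, s (t (k + 1))) = u (t k, s (t 0)) - u (t (k + 1), s (t 0)) := by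
    intro k
    have h := hrect (t k) (t (k + 1)) (s (t (k + 1))) (s (t 0))
    have h0 := huΓ (t (k + 1))
    linarith
  have hsum : ∑ k ∈ Finset.range m, u (t k, s (t (k + 1)))
      = u (t 0, s (t 0)) - u (t m, s (t 0)) := by
    rw [Finset.sum_congr rfl (fun k _ => key k)]
    exact Finset.sum_range_sub' (fun k => u (t k, s (t 0))) m
  rw [hsum, huΓ (t 0), ht0, htm]
  ring
end

section
/- Let s : ℝ → ℝ be a C¹ strictly decreasing bijection and let u : ℝ² → ℝ be a C² function with u_{xy} = 0 at every point of ℝ² and with u(x, s(x)) = 0 for all x ∈ ℝ. Then for every (x₀, y₀) ∈ ℝ², u(x₀, y₀) = ½ ∫_{s⁻¹(y₀)}^{x₀} [uₓ(x, s(x)) − u_y(x, s(x)) · s′(x)] dx. -/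
/-- Riemann's representation for the wave equation in characteristic coordinates
(`u_{xy} = 0`, Riemann function ≡ 1) with Dirichlet condition on `Γ = {(x, s(x))}`. -/
theorem wave_riemann_representation
    (s : ℝ → ℝ) (hs : ContDiff ℝ 1 s) (hsdec : StrictAnti s)
    (hsbij : Function.Bijective s)
    (u : ℝ × ℝ → ℝ) (hu : ContDiff ℝ 2 u)
    (hwave : ∀ p : ℝ × ℝ, pdx (pdy u) p = 0)
    (huΓ : ∀ x : ℝ, u (x, s x) = 0) :
    ∀ x₀ y₀ : ℝ,
      u (x₀, y₀) = (1 / 2) * ∫ x in (Function.invFun s y₀)..x₀,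
        (pdx u (x, s x) - pdy u (x, s x) * deriv s x) := by
  intro x₀ y₀
  have hud : Differentiable ℝ u := hu.differentiable (by norm_num)
  have hsd : Differentiable ℝ s := hs.differentiable one_ne_zero
  -- partial derivatives as fderiv applications
  have hpdx : ∀ p : ℝ × ℝ, pdx u p = fderiv ℝ u p (1, 0) := by
    intro p
    have h1 : HasDerivAt (fun x : ℝ => ((x, p.2) : ℝ × ℝ)) ((1:ℝ), (0:ℝ)) p.1 :=
      (hasDerivAt_id p.1).prodMk (hasDerivAt_const p.1 p.2)
    have h2 : HasFDerivAt u (fderiv ℝ u p) (p.1, p.2) := by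
      simpa using (hud p).hasFDerivAt
    have := (h2.comp_hasDerivAt p.1 h1)
    simpa [pdx, Function.comp_def] using this.deriv
  have hpdy : ∀ p : ℝ × ℝ, pdy u p = fderiv ℝ u p (0, 1) := by
    intro p
    have h1 : HasDerivAt (fun y : ℝ => ((p.1, y) : ℝ × ℝ)) ((0:ℝ), (1:ℝ)) p.2 :=
      (hasDerivAt_const p.2 p.1).prodMk (hasDerivAt_id p.2)
    have h2 : HasFDerivAt u (fderiv ℝ u p) (p.1, p.2) := by
      simpa using (hud p).hasFDerivAt
    have := (h2.comp_hasDerivAt p.2 h1)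
    simpa [pdy, Function.comp_def] using this.deriv
  -- pdy u is C¹
  have hpdyC : ContDiff ℝ 1 (pdy u) := by
    have h1 : ContDiff ℝ 1 (fderiv ℝ u) := hu.fderiv_right (by norm_num)
    have h2 : ContDiff ℝ 1 (fun p : ℝ × ℝ => fderiv ℝ u p ((0:ℝ), (1:ℝ))) :=
      h1.clm_apply contDiff_const
    have : pdy u = fun p : ℝ × ℝ => fderiv ℝ u p ((0:ℝ), (1:ℝ)) := funext hpdy
    rw [this]; exact h2
  -- pdy u depends only on the second variable
  have hconst : ∀ x y : ℝ, pdy u (x, y) = pdy u (x₀, y) := by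
    intro x y
    have hdiff : Differentiable ℝ (fun t : ℝ => pdy u (t, y)) :=
      (hpdyC.differentiable one_ne_zero).comp (differentiable_id.prodMk (differentiable_const y))
    have hz : ∀ t : ℝ, deriv (fun t' : ℝ => pdy u (t', y)) t = 0 := by
      intro t
      have := hwave (t, y)
      simpa [pdx] using this
    exact is_const_of_deriv_eq_zero hdiff hz x x₀
  -- derivative of x ↦ u (x, s x)
  have hcurve : ∀ x : ℝ, HasDerivAt (fun t : ℝ => u (t, s t))
      (pdx u (x, s x) + pdy u (x, s x) * deriv s x) x := by
    intro x
    have hγ : HasDerivAt (fun t : ℝ => ((t, s t) : ℝ × ℝ)) ((1:ℝ), deriv s x) x :=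
      (hasDerivAt_id x).prodMk (hsd x).hasDerivAt
    have h2 : HasFDerivAt u (fderiv ℝ u (x, s x)) ((x, s x) : ℝ × ℝ) :=
      (hud (x, s x)).hasFDerivAt
    have h := h2.comp_hasDerivAt x hγ
    have heq : fderiv ℝ u (x, s x) ((1:ℝ), deriv s x)
        = pdx u (x, s x) + pdy u (x, s x) * deriv s x := by
      have hv : ((1:ℝ), deriv s x) = ((1:ℝ), (0:ℝ)) + (deriv s x) • ((0:ℝ), (1:ℝ)) := by
        simp
      rw [hv, map_add, (fderiv ℝ u (x, s x)).map_smul, hpdx (x, s x), hpdy (x, s x)]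
      simp [smul_eq_mul, mul_comm]
    rw [← heq]
    exact h
  -- Dirichlet condition forces the relation along Γ
  have hrel : ∀ x : ℝ, pdx u (x, s x) = -(pdy u (x, s x) * deriv s x) := by
    intro x
    have h0 : HasDerivAt (fun t : ℝ => u (t, s t)) 0 x := by
      have he : (fun t : ℝ => u (t, s t)) = fun _ : ℝ => (0:ℝ) := funext huΓ
      rw [he]; exact hasDerivAt_const x 0
    have := (hcurve x).unique h0
    linarith
  -- derivative of x ↦ u (x₀, s x)
  have hH : ∀ x : ℝ, HasDerivAt (fun t : ℝ => u (x₀, s t))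
      (pdy u (x₀, s x) * deriv s x) x := by
    intro x
    have hd : DifferentiableAt ℝ (fun y : ℝ => u (x₀, y)) (s x) :=
      (hud (x₀, s x)).comp (s x) ((differentiableAt_const x₀).prodMk differentiableAt_id)
    have h1 : HasDerivAt (fun y : ℝ => u (x₀, y)) (pdy u (x₀, s x)) (s x) := by
      simpa [pdy] using hd.hasDerivAt
    exact h1.comp x (hsd x).hasDerivAt
  have key : ∀ x ∈ Set.uIcc (Function.invFun s y₀) x₀,
      HasDerivAt (fun t : ℝ => (-2 : ℝ) * u (x₀, s t))
      (pdx u (x, s x) - pdy u (x, s x) * deriv s x) x := by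
    intro x _
    have h := (hH x).const_mul (-2 : ℝ)
    have heq : pdx u (x, s x) - pdy u (x, s x) * deriv s x
        = (-2 : ℝ) * (pdy u (x₀, s x) * deriv s x) := by
      rw [hrel x, hconst x (s x)]; ring
    rw [heq]
    exact h
  have hfeq : (fun x : ℝ => pdx u (x, s x) - pdy u (x, s x) * deriv s x)
      = fun x : ℝ => (-2 : ℝ) * (pdy u (x, s x) * deriv s x) := by
    funext x; rw [hrel x]; ring
  have hint : IntervalIntegrable
      (fun x : ℝ => pdx u (x, s x) - pdy u (x, s x) * deriv s x)
      MeasureTheory.volume (Function.invFun s y₀) x₀ := by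
    rw [hfeq]
    apply Continuous.intervalIntegrable
    exact continuous_const.mul
      (((hpdyC.continuous).comp (continuous_id.prodMk hs.continuous)).mul
        (hs.continuous_deriv le_rfl))
  have hFTC := intervalIntegral.integral_eq_sub_of_hasDerivAt key hint
  have hsM : s (Function.invFun s y₀) = y₀ :=
    Function.rightInverse_invFun hsbij.surjective y₀
  rw [hFTC, hsM, huΓ x₀]
  ring
end

section
/- Let a, b, c ∈ ℝ and let u : ℝ² → ℝ be a C² solution of Δu + a uₓ + b u_y + c u = 0 on all of ℝ² with u(0, y) = 0 for every y ∈ ℝ. Then for every (x₀, y₀) ∈ ℝ², u(x₀, y₀) = −e^{−a x₀} · u(−x₀, y₀). -/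
open Real intervalIntegral MeasureTheory

noncomputable section ReflectionAux

/-- the linear map `(x,y) ↦ s*x + t*y` -/
def lin2 (s t : ℝ) : ℝ × ℝ →L[ℝ] ℝ :=
  s • ContinuousLinearMap.fst ℝ ℝ ℝ + t • ContinuousLinearMap.snd ℝ ℝ ℝ

@[simp] lemma lin2_apply (s t : ℝ) (q : ℝ × ℝ) : lin2 s t q = s * q.1 + t * q.2 := by
  simp [lin2, mul_comm]

lemma clm_eq_lin2 (L : ℝ × ℝ →L[ℝ] ℝ) : L = lin2 (L (1, 0)) (L (0, 1)) := by
  apply ContinuousLinearMap.ext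
  intro q
  have hq : q = q.1 • ((1:ℝ), (0:ℝ)) + q.2 • ((0:ℝ), (1:ℝ)) := by
    ext <;> simp
  rw [lin2_apply, hq, map_add, L.map_smul, L.map_smul]
  simp [mul_comm]

/-- slice differentiability in `x` -/
lemma hasDerivAt_slice_x {F : ℝ × ℝ → ℝ} (hF : DifferentiableAt ℝ F p) :
    HasDerivAt (fun x => F (x, p.2)) (fderiv ℝ F p (1, 0)) p.1 := by
  have hc : HasDerivAt (fun x : ℝ => (x, p.2)) ((1:ℝ), (0:ℝ)) p.1 :=
    (hasDerivAt_id p.1).prodMk (hasDerivAt_const p.1 p.2)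
  simpa [Function.comp_def] using (hF.hasFDerivAt.comp_hasDerivAt p.1 hc)

lemma hasDerivAt_slice_y {F : ℝ × ℝ → ℝ} (hF : DifferentiableAt ℝ F p) :
    HasDerivAt (fun y => F (p.1, y)) (fderiv ℝ F p (0, 1)) p.2 := by
  have hc : HasDerivAt (fun y : ℝ => (p.1, y)) ((0:ℝ), (1:ℝ)) p.2 :=
    (hasDerivAt_const p.2 p.1).prodMk (hasDerivAt_id p.2)
  simpa [Function.comp_def] using (hF.hasFDerivAt.comp_hasDerivAt p.2 hc)

/-- continuity of the glued half-plane function -/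
lemma glue_cont {f : ℝ × ℝ → ℝ} (hf : Continuous f) (h0 : ∀ y, f (0, y) = 0) :
    Continuous fun q : ℝ × ℝ => if q.1 < 0 then f q else 0 := by
  rw [continuous_iff_continuousAt]
  intro p
  rcases lt_trichotomy p.1 0 with hp | hp | hp
  · have hev : ∀ᶠ q : ℝ × ℝ in nhds p, (if q.1 < 0 then f q else 0) = f q := by
      have : {q : ℝ × ℝ | q.1 < 0} ∈ nhds p :=
        (isOpen_lt (by fun_prop) continuous_const).mem_nhds hp
      filter_upwards [this] with q hq
      simp [hq]
    exact (hf.continuousAt.congr (Filter.EventuallyEq.symm hev))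
  · -- boundary: squeeze by |f|
    have hfp : f p = 0 := by
      have : p = (0, p.2) := by ext <;> simp [hp]
      rw [this]; exact h0 p.2
    have hb : ∀ q : ℝ × ℝ, ‖(if q.1 < 0 then f q else 0) - 0‖ ≤ ‖f q‖ := by
      intro q
      by_cases hq : q.1 < 0 <;> simp [hq]
    have h1 : Filter.Tendsto (fun q => ‖f q‖) (nhds p) (nhds 0) := by
      have := hf.continuousAt (x := p)
      rw [ContinuousAt, hfp] at this
      simpa using this.norm
    rw [ContinuousAt]
    have h2 : Filter.Tendsto (fun q : ℝ × ℝ => (if q.1 < 0 then f q else 0)) (nhds p)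
        (nhds 0) := by
      apply squeeze_zero_norm _ h1
      intro q
      simpa using hb q
    simpa [hp, hfp] using h2
  · have hev : ∀ᶠ q : ℝ × ℝ in nhds p, (if q.1 < 0 then f q else 0) = 0 := by
      have : {q : ℝ × ℝ | 0 < q.1} ∈ nhds p :=
        (isOpen_lt continuous_const (by fun_prop)).mem_nhds hp
      filter_upwards [this] with q hq
      simp [not_lt.mpr (le_of_lt hq)]
    exact (continuousAt_const.congr (Filter.EventuallyEq.symm hev))

lemma lin2_zero : lin2 0 0 = 0 := by
  apply ContinuousLinearMap.ext
  intro q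
  simp

lemma lin2_norm_le (s t : ℝ) : ‖lin2 s t‖ ≤ |s| + |t| := by
  apply ContinuousLinearMap.opNorm_le_bound _ (by positivity)
  intro q
  rw [lin2_apply]
  calc ‖s * q.1 + t * q.2‖ ≤ ‖s * q.1‖ + ‖t * q.2‖ := norm_add_le _ _
    _ = |s| * ‖q.1‖ + |t| * ‖q.2‖ := by simp [abs_mul]
    _ ≤ |s| * ‖q‖ + |t| * ‖q‖ := by
        gcongr
        · exact norm_fst_le q
        · exact norm_snd_le q
    _ = (|s| + |t|) * ‖q‖ := by ring

/-- differentiability of the glued half-plane function -/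
lemma glue_deriv {f g1 g2 : ℝ × ℝ → ℝ}
    (cg1 : Continuous g1) (cg2 : Continuous g2)
    (hd : ∀ p, HasFDerivAt f (lin2 (g1 p) (g2 p)) p)
    (h0 : ∀ y, f (0, y) = 0) (h1 : ∀ y, g1 (0, y) = 0) (h2 : ∀ y, g2 (0, y) = 0)
    (p : ℝ × ℝ) :
    HasFDerivAt (fun q : ℝ × ℝ => if q.1 < 0 then f q else 0)
      (lin2 (if p.1 < 0 then g1 p else 0) (if p.1 < 0 then g2 p else 0)) p := by
  rcases lt_trichotomy p.1 0 with hp | hp | hp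
  · have hev : ∀ᶠ q : ℝ × ℝ in nhds p, (if q.1 < 0 then f q else 0) = f q := by
      have : {q : ℝ × ℝ | q.1 < 0} ∈ nhds p :=
        (isOpen_lt (by fun_prop) continuous_const).mem_nhds hp
      filter_upwards [this] with q hq
      simp [hq]
    simp only [if_pos hp]
    exact (hd p).congr_of_eventuallyEq hev
  · -- boundary case
    have hp2 : p = (0, p.2) := by ext <;> simp [hp]
    have hg1p : g1 p = 0 := by rw [hp2]; exact h1 p.2
    have hg2p : g2 p = 0 := by rw [hp2]; exact h2 p.2
    have hnot : ¬ p.1 < 0 := by rw [hp]; exact lt_irrefl 0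
    simp only [if_neg hnot, lin2_zero]
    rw [hasFDerivAt_iff_isLittleO_nhds_zero]
    rw [Asymptotics.isLittleO_iff]
    intro ε hε
    -- choose δ so that ‖g1‖, ‖g2‖ ≤ ε/2 on ball p δ
    have hcg : Continuous fun z => |g1 z| + |g2 z| := by fun_prop
    have hval : |g1 p| + |g2 p| = 0 := by rw [hg1p, hg2p]; simp
    have htend : Filter.Tendsto (fun z => |g1 z| + |g2 z|) (nhds p) (nhds 0) := by
      have := hcg.continuousAt (x := p)
      rwa [ContinuousAt, hval] at this
    have hsmall : ∀ᶠ z : ℝ × ℝ in nhds p, |g1 z| + |g2 z| < ε :=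
      htend.eventually_lt_const hε
    rcases Metric.eventually_nhds_iff_ball.1 hsmall with ⟨δ, hδ, hball⟩
    have hev : ∀ᶠ h : ℝ × ℝ in nhds 0, ‖(if (p + h).1 < 0 then f (p + h) else 0) -
        (if p.1 < 0 then f p else 0) - 0‖ ≤ ε * ‖h‖ := by
      have h0ball : ∀ᶠ h : ℝ × ℝ in nhds 0, h ∈ Metric.ball (0 : ℝ × ℝ) δ :=
        Metric.ball_mem_nhds 0 hδ
      filter_upwards [h0ball] with h hh
      simp only [if_neg hnot, sub_zero]
      by_cases hq : (p + h).1 < 0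
      · simp only [if_pos hq]
        set q := p + h with hqdef
        have hqball : q ∈ Metric.ball p δ := by
          rw [Metric.mem_ball, dist_eq_norm]
          have : q - p = h := by rw [hqdef]; abel
          rw [this]
          simpa [dist_eq_norm] using (Metric.mem_ball.1 hh)
        have hzball : ((0 : ℝ), q.2) ∈ Metric.ball p δ := by
          rw [Metric.mem_ball, dist_eq_norm]
          have he : ((0:ℝ), q.2) - p = ((0:ℝ) - p.1, q.2 - p.2) := rfl
          calc ‖((0:ℝ), q.2) - p‖ = ‖((0:ℝ) - p.1, q.2 - p.2)‖ := by rw [he]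
            _ = ‖q.2 - p.2‖ := by rw [hp]; simp [Prod.norm_def]
            _ ≤ ‖q - p‖ := norm_snd_le (q - p)
            _ < δ := by simpa [dist_eq_norm] using hqball
        have hbound : ∀ z ∈ Metric.ball p δ, ‖lin2 (g1 z) (g2 z)‖ ≤ ε := by
          intro z hz
          exact le_trans (lin2_norm_le _ _) (le_of_lt (hball z hz))
        have key := (convex_ball p δ).norm_image_sub_le_of_norm_hasFDerivWithin_le
          (fun z hz => (hd z).hasFDerivWithinAt) hbound hzball hqball
        have hfz : f ((0:ℝ), q.2) = 0 := h0 q.2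
        rw [hfz, sub_zero] at key
        calc ‖f q‖ ≤ ε * ‖q - ((0:ℝ), q.2)‖ := key
          _ = ε * ‖(q.1, (0:ℝ))‖ := by
              congr 1
              congr 1
              ext <;> simp
          _ = ε * |q.1| := by rw [Prod.norm_def]; simp
          _ ≤ ε * ‖h‖ := by
              gcongr
              have : q.1 = p.1 + h.1 := rfl
              rw [this, hp]
              simpa using (norm_fst_le h)
      · simp only [if_neg hq, norm_zero]
        positivity
    exact hev
  · have hev : ∀ᶠ q : ℝ × ℝ in nhds p, (if q.1 < 0 then f q else 0) = 0 := by
      have : {q : ℝ × ℝ | 0 < q.1} ∈ nhds p :=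
        (isOpen_lt continuous_const (by fun_prop)).mem_nhds hp
      filter_upwards [this] with q hq
      simp [not_lt.mpr (le_of_lt hq)]
    simp only [if_neg (not_lt.mpr (le_of_lt hp)), lin2_zero]
    exact (hasFDerivAt_const 0 p).congr_of_eventuallyEq hev

/-- differentiation under the interval integral, continuous setting -/
lemma hasDerivAt_param_integral {F F' : ℝ → ℝ → ℂ}
    (hF : Continuous (Function.uncurry F)) (hF' : Continuous (Function.uncurry F'))
    (hd : ∀ r θ, HasDerivAt (fun s => F s θ) (F' r θ) r) (r : ℝ) :
    HasDerivAt (fun s => ∫ θ in (0:ℝ)..2 * π, F s θ) (∫ θ in (0:ℝ)..2 * π, F' r θ) r := by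
  have hK : IsCompact ((Set.Icc (r - 1) (r + 1)) ×ˢ (Set.uIcc (0:ℝ) (2 * π))) :=
    isCompact_Icc.prod isCompact_uIcc
  obtain ⟨M, hM⟩ := hK.exists_bound_of_continuousOn hF'.continuousOn
  have cFx : ∀ x : ℝ, Continuous (F x) := fun x =>
    hF.comp (continuous_const.prodMk continuous_id)
  have cF'x : ∀ x : ℝ, Continuous (F' x) := fun x =>
    hF'.comp (continuous_const.prodMk continuous_id)
  refine (intervalIntegral.hasDerivAt_integral_of_dominated_loc_of_deriv_le
    (F := F) (F' := F') (bound := fun _ => M) (s := Metric.ball r 1) (Metric.ball_mem_nhds r one_pos)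
    (Filter.Eventually.of_forall fun x => (cFx x).aestronglyMeasurable)
    ((cFx r).intervalIntegrable _ _)
    ((cF'x r).aestronglyMeasurable)
    (Filter.Eventually.of_forall ?_)
    (intervalIntegrable_const)
    (Filter.Eventually.of_forall ?_)).2
  · intro t ht x hx
    have hx' : x ∈ Set.Icc (r - 1) (r + 1) := by
      rw [Metric.mem_ball, Real.dist_eq] at hx
      constructor <;> [linarith [abs_lt.1 hx |>.1]; linarith [abs_lt.1 hx |>.2]]
    have ht' : t ∈ Set.uIcc (0:ℝ) (2 * π) := Set.uIoc_subset_uIcc ht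
    exact hM (x, t) (Set.mk_mem_prod hx' ht')
  · intro t _ x _
    exact hd x t

/-- a continuous `2π`-periodic function with vanishing Fourier coefficients vanishes -/
lemma fourier_vanish {g : ℝ → ℂ} (hg : Continuous g) (hper : Function.Periodic g (2 * π))
    (h : ∀ n : ℤ, (∫ θ in (0:ℝ)..2 * π, g θ * Complex.exp (-(n:ℂ) * θ * Complex.I)) = 0)
    (θ : ℝ) : g θ = 0 := by
  have hT : 0 < 2 * π := by positivity
  haveI : Fact (0 < 2 * π) := ⟨hT⟩
  have hend : g 0 = g (0 + 2 * π) := (hper 0).symm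
  set G : AddCircle (2 * π) → ℂ := AddCircle.liftIco (2 * π) 0 g with hGdef
  have hGc : Continuous G := AddCircle.liftIco_continuous hend hg.continuousOn
  have hGx : ∀ x : ℝ, x ∈ Set.Ico (0:ℝ) (2 * π) → G x = g x := by
    intro x hx
    apply AddCircle.liftIco_coe_apply
    simpa using hx
  have hcoeff : ∀ n : ℤ, fourierCoeff G n = 0 := by
    intro n
    rw [fourierCoeff_eq_intervalIntegral G n 0]
    have : (∫ x in (0:ℝ)..0 + 2 * π, fourier (-n) (x : AddCircle (2 * π)) • G x) = 0 := by
      rw [zero_add]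
      rw [show (∫ x in (0:ℝ)..2 * π, fourier (-n) (x : AddCircle (2 * π)) • G x)
          = ∫ x in (0:ℝ)..2 * π, g x * Complex.exp (-(n:ℂ) * x * Complex.I) from ?_, h n]
      apply intervalIntegral.integral_congr_ae
      have hae : ∀ᵐ x : ℝ, x ≠ 2 * π := by
        simp [MeasureTheory.ae_iff, Real.volume_singleton,
          show {x : ℝ | ¬ x ≠ 2 * π} = {2 * π} by ext; simp]
      filter_upwards [hae] with x hx hmem
      have hx' : x ∈ Set.Ico (0:ℝ) (2 * π) := by
        rcases Set.mem_uIoc.1 hmem with h1 | h1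
        · rcases h1 with ⟨ha, hb⟩
          exact ⟨le_of_lt ha, lt_of_le_of_ne hb hx⟩
        · rcases h1 with ⟨ha, hb⟩
          linarith [hT]
      rw [hGx x hx', fourier_coe_apply, smul_eq_mul, mul_comm]
      congr 2
      push_cast
      have hπ : (π : ℂ) ≠ 0 := by
        simpa using Complex.ofReal_ne_zero.2 (Real.pi_ne_zero)
      field_simp
    rw [this, smul_zero]
  -- `G` as an element of `L²`
  have hcs : HasCompactSupport G :=
    IsCompact.of_isClosed_subset isCompact_univ (isClosed_tsupport G) (Set.subset_univ _)
  have hmem : MeasureTheory.MemLp G 2 (AddCircle.haarAddCircle) :=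
    hGc.memLp_of_hasCompactSupport hcs
  set F := hmem.toLp G with hF
  have hreprF : ∀ n : ℤ, fourierCoeff (⇑F) n = 0 := by
    intro n
    rw [show fourierCoeff (⇑F) n = fourierCoeff G n from ?_]
    · exact hcoeff n
    apply MeasureTheory.integral_congr_ae
    filter_upwards [hmem.coeFn_toLp] with t ht
    rw [ht]
  have hF0 : F = 0 := by
    have h1 : fourierBasis.repr F = 0 := by
      apply lp.ext
      funext i
      rw [fourierBasis_repr]
      simpa using hreprF i
    exact (LinearIsometryEquiv.map_eq_zero_iff _).1 h1
  have hGae : G =ᵐ[AddCircle.haarAddCircle] 0 := by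
    have h1 : ⇑F =ᵐ[AddCircle.haarAddCircle] G := hmem.coeFn_toLp
    have h2 : ⇑F =ᵐ[AddCircle.haarAddCircle] 0 := by
      rw [hF0]
      exact MeasureTheory.Lp.coeFn_zero _ _ _
    exact h1.symm.trans h2
  have hG0 : G = 0 := (hGc.ae_eq_iff_eq AddCircle.haarAddCircle continuous_const).1 hGae
  obtain ⟨y, hy, hxy⟩ := hper.exists_mem_Ico₀ hT θ
  rw [hxy, ← hGx y hy, hG0]
  rfl

namespace HPV

/-- circle of radius `r` around `(1,0)` -/
noncomputable def crc (r θ : ℝ) : ℝ × ℝ := (1 + r * Real.cos θ, r * Real.sin θ)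

noncomputable def eps (n : ℤ) (θ : ℝ) : ℂ := Complex.exp (-(n : ℂ) * θ * Complex.I)

@[fun_prop]
lemma continuous_crc : Continuous fun q : ℝ × ℝ => crc q.1 q.2 := by
  unfold crc; fun_prop

lemma continuous_eps (n : ℤ) : Continuous (eps n) := by
  unfold eps; fun_prop

lemma eps_zero_eq (n : ℤ) : eps n 0 = 1 := by simp [eps]

lemma eps_two_pi (n : ℤ) : eps n (2 * π) = 1 := by
  unfold eps
  rw [show -(n:ℂ) * ((2 * π : ℝ) : ℂ) * Complex.I = ((-n : ℤ) : ℂ) * (2 * (π:ℂ) * Complex.I) by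
    push_cast; ring]
  exact Complex.exp_int_mul_two_pi_mul_I (-n)

lemma hasDerivAt_eps (n : ℤ) (θ : ℝ) :
    HasDerivAt (eps n) (-(n:ℂ) * Complex.I * eps n θ) θ := by
  have h0 : HasDerivAt (fun t : ℝ => (t : ℂ)) 1 θ := by
    simpa using (hasDerivAt_id θ).ofReal_comp
  have h1 : HasDerivAt (fun t : ℝ => (t : ℂ) * (-(n:ℂ) * Complex.I)) (-(n:ℂ) * Complex.I) θ := by
    simpa using h0.mul_const (-(n:ℂ) * Complex.I)
  have h2 := h1.cexp
  have heq : (fun t : ℝ => Complex.exp ((t:ℂ) * (-(n:ℂ) * Complex.I))) = eps n := by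
    funext t
    unfold eps
    congr 1
    ring
  rw [heq] at h2
  convert h2 using 1
  unfold eps
  rw [mul_comm]
  congr 1
  congr 1
  ring

lemma hasDerivAt_crc_r (θ r : ℝ) :
    HasDerivAt (fun s => crc s θ) ((Real.cos θ, Real.sin θ)) r := by
  unfold crc
  apply HasDerivAt.prodMk
  · simpa using ((hasDerivAt_id r).mul_const (Real.cos θ)).const_add 1
  · simpa using (hasDerivAt_id r).mul_const (Real.sin θ)

lemma hasDerivAt_crc_theta (r θ : ℝ) :
    HasDerivAt (fun t => crc r t) ((-(r * Real.sin θ), r * Real.cos θ)) θ := by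
  unfold crc
  apply HasDerivAt.prodMk
  · simpa [mul_comm] using ((Real.hasDerivAt_cos θ).const_mul r).const_add 1
  · simpa [mul_comm] using (Real.hasDerivAt_sin θ).const_mul r

/-- Fourier-mode integral of `F` on the circle of radius `r` around `(1,0)`. -/
noncomputable def AInt (F : ℝ × ℝ → ℝ → ℝ) (n : ℤ) (r : ℝ) : ℂ :=
  ∫ θ in (0:ℝ)..2 * π, ((F (crc r θ) θ : ℝ) : ℂ) * eps n θ

lemma cont_slice {F : ℝ × ℝ → ℝ → ℝ} (hFc : Continuous fun q : ℝ × ℝ => F (crc q.1 q.2) q.2)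
    (n : ℤ) (r : ℝ) : Continuous fun θ : ℝ => ((F (crc r θ) θ : ℝ) : ℂ) * eps n θ := by
  have h1 : Continuous fun θ : ℝ => F (crc r θ) θ :=
    hFc.comp (by fun_prop : Continuous fun θ : ℝ => ((r, θ) : ℝ × ℝ))
  exact (Complex.continuous_ofReal.comp h1).mul (continuous_eps n)

lemma AInt_hasDerivAt {F G : ℝ × ℝ → ℝ → ℝ}
    (hFc : Continuous fun q : ℝ × ℝ => F (crc q.1 q.2) q.2)
    (hGc : Continuous fun q : ℝ × ℝ => G (crc q.1 q.2) q.2)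
    (hd : ∀ r θ, HasDerivAt (fun s => F (crc s θ) θ) (G (crc r θ) θ) r)
    (n : ℤ) (r : ℝ) :
    HasDerivAt (AInt F n) (AInt G n r) r := by
  apply hasDerivAt_param_integral
    (F := fun s θ => ((F (crc s θ) θ : ℝ) : ℂ) * eps n θ)
    (F' := fun s θ => ((G (crc s θ) θ : ℝ) : ℂ) * eps n θ)
  · show Continuous fun q : ℝ × ℝ => ((F (crc q.1 q.2) q.2 : ℝ) : ℂ) * eps n q.2
    exact (Complex.continuous_ofReal.comp hFc).mul ((continuous_eps n).comp continuous_snd)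
  · show Continuous fun q : ℝ × ℝ => ((G (crc q.1 q.2) q.2 : ℝ) : ℂ) * eps n q.2
    exact (Complex.continuous_ofReal.comp hGc).mul ((continuous_eps n).comp continuous_snd)
  · intro s θ
    exact ((hd s θ).ofReal_comp).mul_const (eps n θ)

noncomputable def Af (f : ℝ × ℝ → ℝ) : ℤ → ℝ → ℂ := AInt (fun p _ => f p)

noncomputable def Aq (g1 g2 : ℝ × ℝ → ℝ) : ℤ → ℝ → ℂ :=
  AInt (fun p θ => g1 p * Real.cos θ + g2 p * Real.sin θ)

noncomputable def As (g1 g2 : ℝ × ℝ → ℝ) : ℤ → ℝ → ℂ :=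
  AInt (fun p θ => g1 p * (-Real.sin θ) + g2 p * Real.cos θ)

noncomputable def Ah (h11 h12 h22 : ℝ × ℝ → ℝ) : ℤ → ℝ → ℂ :=
  AInt (fun p θ => h11 p * Real.cos θ ^ 2 + 2 * h12 p * (Real.cos θ * Real.sin θ)
    + h22 p * Real.sin θ ^ 2)

noncomputable def Av (h11 h12 h22 : ℝ × ℝ → ℝ) : ℤ → ℝ → ℂ :=
  AInt (fun p θ => h11 p * Real.sin θ ^ 2 - 2 * h12 p * (Real.cos θ * Real.sin θ)
    + h22 p * Real.cos θ ^ 2)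

lemma crc_two_pi_eq (r : ℝ) : crc r (2 * π) = crc r 0 := by
  unfold crc
  simp [Real.cos_two_pi, Real.sin_two_pi]

section IBP

variable {f g1 g2 h11 h12 h22 : ℝ × ℝ → ℝ}

/-- first integration by parts in `θ`: `r * S = n i A`. -/
lemma K1 (cf : Continuous f) (cg1 : Continuous cg1eq) (cg2 : Continuous g2)
    (hdf : ∀ p, HasFDerivAt f (lin2 (cg1eq p) (g2 p)) p) (n : ℤ) (r : ℝ) :
    (r:ℂ) * As cg1eq g2 n r = (n:ℂ) * Complex.I * Af f n r := by
  classical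
  set Ψ : ℝ → ℂ := fun θ => ((f (crc r θ) : ℝ) : ℂ) * eps n θ with hΨdef
  set ψ : ℝ → ℂ := fun θ =>
      (r:ℂ) * (((cg1eq (crc r θ) * (-Real.sin θ) + g2 (crc r θ) * Real.cos θ : ℝ) : ℂ) * eps n θ)
      + (-(n:ℂ) * Complex.I) * (((f (crc r θ) : ℝ) : ℂ) * eps n θ) with hψdef
  have hd : ∀ θ ∈ Set.uIcc (0:ℝ) (2 * π), HasDerivAt Ψ (ψ θ) θ := by
    intro θ _
    have hre : HasDerivAt (fun t => f (crc r t))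
        (cg1eq (crc r θ) * (-(r * Real.sin θ)) + g2 (crc r θ) * (r * Real.cos θ)) θ := by
      simpa [Function.comp_def] using (hdf (crc r θ)).comp_hasDerivAt θ (hasDerivAt_crc_theta r θ)
    have := (hre.ofReal_comp).mul (hasDerivAt_eps n θ)
    refine this.congr_deriv ?_
    rw [hψdef]
    push_cast
    ring
  have c1 : Continuous fun θ : ℝ =>
      ((cg1eq (crc r θ) * (-Real.sin θ) + g2 (crc r θ) * Real.cos θ : ℝ) : ℂ) * eps n θ :=
    cont_slice (F := fun p θ => cg1eq p * (-Real.sin θ) + g2 p * Real.cos θ) (by fun_prop) n r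
  have c2 : Continuous fun θ : ℝ => ((f (crc r θ) : ℝ) : ℂ) * eps n θ :=
    cont_slice (F := fun p _ => f p) (by fun_prop) n r
  have hψc : Continuous ψ := by
    rw [hψdef]
    exact (continuous_const.mul c1).add (continuous_const.mul c2)
  have hint : (∫ θ in (0:ℝ)..2 * π, ψ θ) = Ψ (2 * π) - Ψ 0 :=
    intervalIntegral.integral_eq_sub_of_hasDerivAt hd (hψc.intervalIntegrable _ _)
  have hzero : Ψ (2 * π) - Ψ 0 = 0 := by
    rw [hΨdef]
    simp [crc_two_pi_eq, eps_two_pi, eps_zero_eq]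
  have hsplit : (∫ θ in (0:ℝ)..2 * π, ψ θ)
      = (r:ℂ) * As cg1eq g2 n r + (-(n:ℂ) * Complex.I) * Af f n r := by
    rw [hψdef]
    rw [intervalIntegral.integral_add
      ((c1.intervalIntegrable _ _).const_mul (r:ℂ))
      ((c2.intervalIntegrable _ _).const_mul (-(n:ℂ) * Complex.I))]
    rw [intervalIntegral.integral_const_mul, intervalIntegral.integral_const_mul]
    rfl
  have h0 : (r:ℂ) * As cg1eq g2 n r + (-(n:ℂ) * Complex.I) * Af f n r = 0 := by
    rw [← hsplit, hint, hzero]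
  linear_combination h0

/-- second integration by parts in `θ`: `r * V = Q + n i S`. -/
lemma K2 (cg1 : Continuous g1) (cg2 : Continuous g2)
    (ch11 : Continuous h11) (ch12 : Continuous h12) (ch22 : Continuous h22)
    (hdg1 : ∀ p, HasFDerivAt g1 (lin2 (h11 p) (h12 p)) p)
    (hdg2 : ∀ p, HasFDerivAt g2 (lin2 (h12 p) (h22 p)) p) (n : ℤ) (r : ℝ) :
    (r:ℂ) * Av h11 h12 h22 n r = Aq g1 g2 n r + (n:ℂ) * Complex.I * As g1 g2 n r := by
  classical
  set Ψ : ℝ → ℂ := fun θ =>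
      ((g1 (crc r θ) * (-Real.sin θ) + g2 (crc r θ) * Real.cos θ : ℝ) : ℂ) * eps n θ with hΨdef
  set ψ : ℝ → ℂ := fun θ =>
      (r:ℂ) * (((h11 (crc r θ) * Real.sin θ ^ 2 - 2 * h12 (crc r θ) * (Real.cos θ * Real.sin θ)
          + h22 (crc r θ) * Real.cos θ ^ 2 : ℝ) : ℂ) * eps n θ)
      - ((g1 (crc r θ) * Real.cos θ + g2 (crc r θ) * Real.sin θ : ℝ) : ℂ) * eps n θ
      + (-(n:ℂ) * Complex.I) *
        (((g1 (crc r θ) * (-Real.sin θ) + g2 (crc r θ) * Real.cos θ : ℝ) : ℂ) * eps n θ)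
    with hψdef
  have hd : ∀ θ ∈ Set.uIcc (0:ℝ) (2 * π), HasDerivAt Ψ (ψ θ) θ := by
    intro θ _
    have hg1c : HasDerivAt (fun t => g1 (crc r t))
        (h11 (crc r θ) * (-(r * Real.sin θ)) + h12 (crc r θ) * (r * Real.cos θ)) θ := by
      simpa [Function.comp_def] using (hdg1 (crc r θ)).comp_hasDerivAt θ (hasDerivAt_crc_theta r θ)
    have hg2c : HasDerivAt (fun t => g2 (crc r t))
        (h12 (crc r θ) * (-(r * Real.sin θ)) + h22 (crc r θ) * (r * Real.cos θ)) θ := by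
      simpa [Function.comp_def] using (hdg2 (crc r θ)).comp_hasDerivAt θ (hasDerivAt_crc_theta r θ)
    have hs : HasDerivAt (fun t : ℝ => -Real.sin t) (-Real.cos θ) θ :=
      (Real.hasDerivAt_sin θ).neg
    have hre : HasDerivAt (fun t => g1 (crc r t) * (-Real.sin t) + g2 (crc r t) * Real.cos t)
        ((h11 (crc r θ) * (-(r * Real.sin θ)) + h12 (crc r θ) * (r * Real.cos θ)) * (-Real.sin θ)
          + g1 (crc r θ) * (-Real.cos θ)
          + ((h12 (crc r θ) * (-(r * Real.sin θ)) + h22 (crc r θ) * (r * Real.cos θ)) * Real.cos θ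
            + g2 (crc r θ) * (-Real.sin θ))) θ :=
      (hg1c.mul hs).add (hg2c.mul (Real.hasDerivAt_cos θ))
    have := (hre.ofReal_comp).mul (hasDerivAt_eps n θ)
    refine this.congr_deriv ?_
    rw [hψdef]
    push_cast
    ring
  have c1 : Continuous fun θ : ℝ =>
      ((h11 (crc r θ) * Real.sin θ ^ 2 - 2 * h12 (crc r θ) * (Real.cos θ * Real.sin θ)
        + h22 (crc r θ) * Real.cos θ ^ 2 : ℝ) : ℂ) * eps n θ :=
    cont_slice (F := fun p θ => h11 p * Real.sin θ ^ 2 - 2 * h12 p * (Real.cos θ * Real.sin θ)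
      + h22 p * Real.cos θ ^ 2) (by fun_prop) n r
  have c2 : Continuous fun θ : ℝ =>
      ((g1 (crc r θ) * Real.cos θ + g2 (crc r θ) * Real.sin θ : ℝ) : ℂ) * eps n θ :=
    cont_slice (F := fun p θ => g1 p * Real.cos θ + g2 p * Real.sin θ) (by fun_prop) n r
  have c3 : Continuous fun θ : ℝ =>
      ((g1 (crc r θ) * (-Real.sin θ) + g2 (crc r θ) * Real.cos θ : ℝ) : ℂ) * eps n θ :=
    cont_slice (F := fun p θ => g1 p * (-Real.sin θ) + g2 p * Real.cos θ) (by fun_prop) n r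
  have hψc : Continuous ψ := by
    rw [hψdef]
    exact ((continuous_const.mul c1).sub c2).add (continuous_const.mul c3)
  have hint : (∫ θ in (0:ℝ)..2 * π, ψ θ) = Ψ (2 * π) - Ψ 0 :=
    intervalIntegral.integral_eq_sub_of_hasDerivAt hd (hψc.intervalIntegrable _ _)
  have hzero : Ψ (2 * π) - Ψ 0 = 0 := by
    rw [hΨdef]
    simp [crc_two_pi_eq, eps_two_pi, eps_zero_eq]
  have hsplit : (∫ θ in (0:ℝ)..2 * π, ψ θ)
      = (r:ℂ) * Av h11 h12 h22 n r - Aq g1 g2 n r + (-(n:ℂ) * Complex.I) * As g1 g2 n r := by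
    rw [hψdef]
    rw [intervalIntegral.integral_add
      (((c1.intervalIntegrable _ _).const_mul (r:ℂ)).sub (c2.intervalIntegrable _ _))
      ((c3.intervalIntegrable _ _).const_mul (-(n:ℂ) * Complex.I))]
    rw [intervalIntegral.integral_sub
      ((c1.intervalIntegrable _ _).const_mul (r:ℂ)) (c2.intervalIntegrable _ _)]
    rw [intervalIntegral.integral_const_mul, intervalIntegral.integral_const_mul]
    rfl
  have h0 : (r:ℂ) * Av h11 h12 h22 n r - Aq g1 g2 n r
      + (-(n:ℂ) * Complex.I) * As g1 g2 n r = 0 := by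
    rw [← hsplit, hint, hzero]
  linear_combination h0

/-- trace identity. -/
lemma K3 {lam : ℝ} (cf : Continuous f)
    (ch11 : Continuous h11) (ch12 : Continuous h12) (ch22 : Continuous h22)
    (heq : ∀ p, h11 p + h22 p + lam * f p = 0) (n : ℤ) (r : ℝ) :
    Ah h11 h12 h22 n r + Av h11 h12 h22 n r = -(lam:ℂ) * Af f n r := by
  have c1 : Continuous fun θ : ℝ =>
      ((h11 (crc r θ) * Real.cos θ ^ 2 + 2 * h12 (crc r θ) * (Real.cos θ * Real.sin θ)
        + h22 (crc r θ) * Real.sin θ ^ 2 : ℝ) : ℂ) * eps n θ :=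
    cont_slice (F := fun p θ => h11 p * Real.cos θ ^ 2 + 2 * h12 p * (Real.cos θ * Real.sin θ)
      + h22 p * Real.sin θ ^ 2) (by fun_prop) n r
  have c2 : Continuous fun θ : ℝ =>
      ((h11 (crc r θ) * Real.sin θ ^ 2 - 2 * h12 (crc r θ) * (Real.cos θ * Real.sin θ)
        + h22 (crc r θ) * Real.cos θ ^ 2 : ℝ) : ℂ) * eps n θ :=
    cont_slice (F := fun p θ => h11 p * Real.sin θ ^ 2 - 2 * h12 p * (Real.cos θ * Real.sin θ)
      + h22 p * Real.cos θ ^ 2) (by fun_prop) n r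
  have hAdd : Ah h11 h12 h22 n r + Av h11 h12 h22 n r
      = ∫ θ in (0:ℝ)..2 * π,
          (((h11 (crc r θ) * Real.cos θ ^ 2 + 2 * h12 (crc r θ) * (Real.cos θ * Real.sin θ)
            + h22 (crc r θ) * Real.sin θ ^ 2 : ℝ) : ℂ) * eps n θ
          + ((h11 (crc r θ) * Real.sin θ ^ 2 - 2 * h12 (crc r θ) * (Real.cos θ * Real.sin θ)
            + h22 (crc r θ) * Real.cos θ ^ 2 : ℝ) : ℂ) * eps n θ) := by
    rw [intervalIntegral.integral_add (c1.intervalIntegrable _ _) (c2.intervalIntegrable _ _)]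
    rfl
  rw [hAdd]
  have hpt : ∀ θ : ℝ,
      (((h11 (crc r θ) * Real.cos θ ^ 2 + 2 * h12 (crc r θ) * (Real.cos θ * Real.sin θ)
        + h22 (crc r θ) * Real.sin θ ^ 2 : ℝ) : ℂ) * eps n θ
      + ((h11 (crc r θ) * Real.sin θ ^ 2 - 2 * h12 (crc r θ) * (Real.cos θ * Real.sin θ)
        + h22 (crc r θ) * Real.cos θ ^ 2 : ℝ) : ℂ) * eps n θ)
      = (-(lam:ℂ)) * (((f (crc r θ) : ℝ) : ℂ) * eps n θ) := by
    intro θ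
    have h := heq (crc r θ)
    have htrig := Real.sin_sq_add_cos_sq θ
    have hre : (h11 (crc r θ) * Real.cos θ ^ 2 + 2 * h12 (crc r θ) * (Real.cos θ * Real.sin θ)
        + h22 (crc r θ) * Real.sin θ ^ 2)
        + (h11 (crc r θ) * Real.sin θ ^ 2 - 2 * h12 (crc r θ) * (Real.cos θ * Real.sin θ)
        + h22 (crc r θ) * Real.cos θ ^ 2) = -lam * f (crc r θ) := by
      linear_combination (h11 (crc r θ) + h22 (crc r θ)) * htrig + h
    calc (((h11 (crc r θ) * Real.cos θ ^ 2 + 2 * h12 (crc r θ) * (Real.cos θ * Real.sin θ)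
        + h22 (crc r θ) * Real.sin θ ^ 2 : ℝ) : ℂ) * eps n θ
      + ((h11 (crc r θ) * Real.sin θ ^ 2 - 2 * h12 (crc r θ) * (Real.cos θ * Real.sin θ)
        + h22 (crc r θ) * Real.cos θ ^ 2 : ℝ) : ℂ) * eps n θ)
        = (((h11 (crc r θ) * Real.cos θ ^ 2 + 2 * h12 (crc r θ) * (Real.cos θ * Real.sin θ)
            + h22 (crc r θ) * Real.sin θ ^ 2)
          + (h11 (crc r θ) * Real.sin θ ^ 2 - 2 * h12 (crc r θ) * (Real.cos θ * Real.sin θ)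
            + h22 (crc r θ) * Real.cos θ ^ 2) : ℝ) : ℂ) * eps n θ := by push_cast; ring
      _ = ((-lam * f (crc r θ) : ℝ) : ℂ) * eps n θ := by rw [hre]
      _ = (-(lam:ℂ)) * (((f (crc r θ) : ℝ) : ℂ) * eps n θ) := by push_cast; ring
  rw [intervalIntegral.integral_congr (g := fun θ =>
      (-(lam:ℂ)) * (((f (crc r θ) : ℝ) : ℂ) * eps n θ)) (fun θ _ => hpt θ)]
  rw [intervalIntegral.integral_const_mul]
  rfl

/-- the Bessel-type ODE for the Fourier modes, valid for `r ≥ 1`. -/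
lemma modeODE {lam : ℝ} (cf : Continuous f) (cg1 : Continuous g1) (cg2 : Continuous g2)
    (ch11 : Continuous h11) (ch12 : Continuous h12) (ch22 : Continuous h22)
    (hdf : ∀ p, HasFDerivAt f (lin2 (g1 p) (g2 p)) p)
    (hdg1 : ∀ p, HasFDerivAt g1 (lin2 (h11 p) (h12 p)) p)
    (hdg2 : ∀ p, HasFDerivAt g2 (lin2 (h12 p) (h22 p)) p)
    (heq : ∀ p, h11 p + h22 p + lam * f p = 0) (n : ℤ) (r : ℝ) (hr : 1 ≤ r) :
    Ah h11 h12 h22 n r = -(lam:ℂ) * Af f n r - Aq g1 g2 n r / r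
      + (n:ℂ)^2 * Af f n r / r^2 := by
  have hr0 : (r:ℂ) ≠ 0 := by
    simp only [ne_eq, Complex.ofReal_eq_zero]
    intro h; rw [h] at hr; linarith
  have k1 := K1 cf cg1 cg2 hdf n r
  have k2 := K2 cg1 cg2 ch11 ch12 ch22 hdg1 hdg2 n r
  have k3 := K3 cf ch11 ch12 ch22 heq n r
  have hI : (Complex.I : ℂ)^2 = -1 := Complex.I_sq
  have hr2 : ((r:ℂ))^2 ≠ 0 := pow_ne_zero 2 hr0
  have hmul : Ah h11 h12 h22 n r * (r:ℂ)^2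
      = (-(lam:ℂ) * Af f n r) * (r:ℂ)^2 - Aq g1 g2 n r * r + (n:ℂ)^2 * Af f n r := by
    linear_combination ((r:ℂ)^2) * k3 - (r:ℂ) * k2 - ((n:ℂ) * Complex.I) * k1
      - ((n:ℂ)^2 * Af f n r) * hI
  rw [show -(lam:ℂ) * Af f n r - Aq g1 g2 n r / r + (n:ℂ)^2 * Af f n r / r^2
      = ((-(lam:ℂ) * Af f n r) * (r:ℂ)^2 - Aq g1 g2 n r * r + (n:ℂ)^2 * Af f n r) / (r:ℂ)^2
    from by field_simp]
  rw [eq_div_iff hr2]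
  linear_combination hmul

end IBP

end HPV

/-- Core lemma: a `C²`-type solution of `Δf + λ f = 0` on `ℝ²` vanishing on the closed right
half-plane vanishes identically. -/
theorem halfplane_vanish {lam : ℝ} {f g1 g2 h11 h12 h22 : ℝ × ℝ → ℝ}
    (cf : Continuous f) (cg1 : Continuous g1) (cg2 : Continuous g2)
    (ch11 : Continuous h11) (ch12 : Continuous h12) (ch22 : Continuous h22)
    (hdf : ∀ p, HasFDerivAt f (lin2 (g1 p) (g2 p)) p)
    (hdg1 : ∀ p, HasFDerivAt g1 (lin2 (h11 p) (h12 p)) p)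
    (hdg2 : ∀ p, HasFDerivAt g2 (lin2 (h12 p) (h22 p)) p)
    (heq : ∀ p, h11 p + h22 p + lam * f p = 0)
    (hzero : ∀ p : ℝ × ℝ, 0 ≤ p.1 → f p = 0) :
    ∀ p, f p = 0 := by
  classical
  open HPV in
  -- gradient vanishes on the closed right half-plane
  have hgrad0 : ∀ p : ℝ × ℝ, 0 ≤ p.1 → g1 p = 0 ∧ g2 p = 0 := by
    have hopen : ∀ p : ℝ × ℝ, 0 < p.1 → g1 p = 0 ∧ g2 p = 0 := by
      intro p hp
      have hev : f =ᶠ[nhds p] fun _ => (0:ℝ) := by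
        have : {q : ℝ × ℝ | 0 < q.1} ∈ nhds p :=
          (isOpen_lt continuous_const (by fun_prop)).mem_nhds hp
        filter_upwards [this] with q hq using hzero q (le_of_lt hq)
      have h0 : HasFDerivAt f (0 : ℝ × ℝ →L[ℝ] ℝ) p :=
        (hasFDerivAt_const (0:ℝ) p).congr_of_eventuallyEq hev
      have huniq : lin2 (g1 p) (g2 p) = 0 := (hdf p).unique h0
      constructor
      · have := congrArg (fun L : ℝ × ℝ →L[ℝ] ℝ => L ((1:ℝ), (0:ℝ))) huniq
        simpa using this
      · have := congrArg (fun L : ℝ × ℝ →L[ℝ] ℝ => L ((0:ℝ), (1:ℝ))) huniq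
        simpa using this
    intro p hp
    rcases lt_or_eq_of_le hp with hlt | heqq
    · exact hopen p hlt
    · have hseq : Filter.Tendsto (fun t : ℝ => ((t, p.2) : ℝ × ℝ))
          (nhdsWithin 0 (Set.Ioi 0)) (nhds p) := by
        have h1 : Filter.Tendsto (fun t : ℝ => ((t, p.2) : ℝ × ℝ)) (nhds 0) (nhds (0, p.2)) :=
          Continuous.tendsto (by fun_prop) 0
        have hp2 : p = ((0:ℝ), p.2) := by ext <;> simp [heqq.symm]
        rw [hp2]
        exact h1.mono_left nhdsWithin_le_nhds
      constructor
      · have ht1 : Filter.Tendsto (fun t : ℝ => g1 (t, p.2)) (nhdsWithin 0 (Set.Ioi 0))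
            (nhds (g1 p)) := (cg1.continuousAt.tendsto.comp hseq)
        have ht2 : Filter.Tendsto (fun t : ℝ => g1 (t, p.2)) (nhdsWithin 0 (Set.Ioi 0))
            (nhds 0) := by
          apply Filter.Tendsto.congr' _ tendsto_const_nhds
          filter_upwards [self_mem_nhdsWithin] with t ht
          exact ((hopen (t, p.2) ht).1).symm
        exact tendsto_nhds_unique ht1 ht2
      · have ht1 : Filter.Tendsto (fun t : ℝ => g2 (t, p.2)) (nhdsWithin 0 (Set.Ioi 0))
            (nhds (g2 p)) := (cg2.continuousAt.tendsto.comp hseq)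
        have ht2 : Filter.Tendsto (fun t : ℝ => g2 (t, p.2)) (nhdsWithin 0 (Set.Ioi 0))
            (nhds 0) := by
          apply Filter.Tendsto.congr' _ tendsto_const_nhds
          filter_upwards [self_mem_nhdsWithin] with t ht
          exact ((hopen (t, p.2) ht).2).symm
        exact tendsto_nhds_unique ht1 ht2
  -- the mode integrals vanish for small radii
  have hA0 : ∀ (n : ℤ) (r : ℝ), 0 ≤ r → r ≤ 1 → Af f n r = 0 := by
    intro n r hr0 hr1
    show (∫ θ in (0:ℝ)..2 * π, ((f (crc r θ) : ℝ) : ℂ) * eps n θ) = 0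
    rw [intervalIntegral.integral_congr (g := fun _ => (0:ℂ))]
    · exact intervalIntegral.integral_zero
    intro θ _
    have hx : 0 ≤ (crc r θ).1 := by
      have hc := Real.neg_one_le_cos θ
      have : -r ≤ r * Real.cos θ := by nlinarith
      show 0 ≤ 1 + r * Real.cos θ
      linarith
    simp [hzero _ hx]
  have hQ1 : ∀ n : ℤ, Aq g1 g2 n 1 = 0 := by
    intro n
    show (∫ θ in (0:ℝ)..2 * π,
      ((g1 (crc 1 θ) * Real.cos θ + g2 (crc 1 θ) * Real.sin θ : ℝ) : ℂ) * eps n θ) = 0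
    rw [intervalIntegral.integral_congr (g := fun _ => (0:ℂ))]
    · exact intervalIntegral.integral_zero
    intro θ _
    have hx : 0 ≤ (crc 1 θ).1 := by
      have hc := Real.neg_one_le_cos θ
      show 0 ≤ 1 + 1 * Real.cos θ
      linarith
    rcases hgrad0 _ hx with ⟨e1, e2⟩
    simp [e1, e2]
  -- derivative facts
  have hAd : ∀ (n : ℤ) (t : ℝ), HasDerivAt (Af f n) (Aq g1 g2 n t) t := by
    intro n t
    apply AInt_hasDerivAt (by fun_prop) (by fun_prop)
    intro r θ
    simpa [Function.comp_def] using (hdf (crc r θ)).comp_hasDerivAt r (hasDerivAt_crc_r θ r)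
  have hQd : ∀ (n : ℤ) (t : ℝ), HasDerivAt (Aq g1 g2 n) (Ah h11 h12 h22 n t) t := by
    intro n t
    apply AInt_hasDerivAt (by fun_prop) (by fun_prop)
    intro r θ
    have h1 := ((hdg1 (crc r θ)).comp_hasDerivAt r (hasDerivAt_crc_r θ r)).mul_const (Real.cos θ)
    have h2 := ((hdg2 (crc r θ)).comp_hasDerivAt r (hasDerivAt_crc_r θ r)).mul_const (Real.sin θ)
    have h3 := h1.add h2
    refine h3.congr_deriv ?_
    simp only [lin2_apply]
    ring
  -- Gronwall: modes vanish for all radii ≥ 1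
  have hAbig : ∀ (n : ℤ) (r : ℝ), 1 ≤ r → Af f n r = 0 := by
    intro n r hr
    set K : ℝ := |lam| + (n:ℝ)^2 + 1 with hKdef
    set X : ℝ → ℂ × ℂ := fun t => (Af f n t, Aq g1 g2 n t) with hXdef
    have hXd : ∀ t, HasDerivAt X ((Aq g1 g2 n t, Ah h11 h12 h22 n t)) t := fun t =>
      (hAd n t).prodMk (hQd n t)
    have key := norm_le_gronwallBound_of_norm_deriv_right_le (f := X)
      (f' := fun t => (Aq g1 g2 n t, Ah h11 h12 h22 n t)) (δ := 0) (K := K) (ε := 0)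
      (a := 1) (b := r)
      (fun t _ => (hXd t).continuousAt.continuousWithinAt)
      (fun t _ => (hXd t).hasDerivWithinAt)
      (by
        show ‖((Af f n 1, Aq g1 g2 n 1) : ℂ × ℂ)‖ ≤ 0
        rw [hA0 n 1 zero_le_one le_rfl, hQ1 n]
        simp [Prod.norm_def])
      (by
        intro t ht
        have ht1 : 1 ≤ t := ht.1
        have ht0 : 0 < t := lt_of_lt_of_le zero_lt_one ht1
        rw [add_zero]
        have hXnorm : ‖X t‖ = max ‖Af f n t‖ ‖Aq g1 g2 n t‖ := rfl
        have hAfle : ‖Af f n t‖ ≤ ‖X t‖ := by rw [hXnorm]; exact le_max_left _ _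
        have hAqle : ‖Aq g1 g2 n t‖ ≤ ‖X t‖ := by rw [hXnorm]; exact le_max_right _ _
        have hXpos : 0 ≤ ‖X t‖ := norm_nonneg _
        have hAh : ‖Ah h11 h12 h22 n t‖ ≤ K * ‖X t‖ := by
          rw [modeODE cf cg1 cg2 ch11 ch12 ch22 hdf hdg1 hdg2 heq n t ht1]
          have e1 : ‖-(lam:ℂ) * Af f n t‖ ≤ |lam| * ‖X t‖ := by
            have h1 : ‖-(lam:ℂ) * Af f n t‖ = |lam| * ‖Af f n t‖ := by
              rw [norm_mul, norm_neg, Complex.norm_real, Real.norm_eq_abs]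
            rw [h1]
            exact mul_le_mul_of_nonneg_left hAfle (abs_nonneg _)
          have htnorm : ‖(t:ℂ)‖ = t := by
            simp [Complex.norm_real, abs_of_pos ht0]
          have e2 : ‖Aq g1 g2 n t / (t:ℂ)‖ ≤ ‖X t‖ := by
            rw [norm_div, htnorm]
            exact le_trans (div_le_self (norm_nonneg _) ht1) hAqle
          have e3 : ‖(n:ℂ)^2 * Af f n t / (t:ℂ)^2‖ ≤ (n:ℝ)^2 * ‖X t‖ := by
            have h1t : (1:ℝ) ≤ t^2 := by nlinarith
            have hne : ‖(n:ℂ)^2‖ = (n:ℝ)^2 := by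
              have hcast : ((n:ℂ))^2 = ((((n:ℝ)^2 : ℝ)) : ℂ) := by push_cast; ring
              rw [hcast, Complex.norm_real, Real.norm_eq_abs, abs_of_nonneg (sq_nonneg _)]
            have hde : ‖((t:ℂ))^2‖ = t^2 := by rw [norm_pow, htnorm]
            have hnormeq : ‖(n:ℂ)^2 * Af f n t / (t:ℂ)^2‖
                = ((n:ℝ)^2 * ‖Af f n t‖) / t^2 := by
              rw [norm_div, norm_mul, hne, hde]
            rw [hnormeq]
            calc (n:ℝ)^2 * ‖Af f n t‖ / t^2 ≤ (n:ℝ)^2 * ‖Af f n t‖ := by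
                  apply div_le_self _ h1t
                  positivity
              _ ≤ (n:ℝ)^2 * ‖X t‖ := mul_le_mul_of_nonneg_left hAfle (sq_nonneg _)
          calc ‖-(lam:ℂ) * Af f n t - Aq g1 g2 n t / (t:ℂ) + (n:ℂ)^2 * Af f n t / (t:ℂ)^2‖
              ≤ ‖-(lam:ℂ) * Af f n t - Aq g1 g2 n t / (t:ℂ)‖
                + ‖(n:ℂ)^2 * Af f n t / (t:ℂ)^2‖ := norm_add_le _ _
            _ ≤ ‖-(lam:ℂ) * Af f n t‖ + ‖Aq g1 g2 n t / (t:ℂ)‖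
                + ‖(n:ℂ)^2 * Af f n t / (t:ℂ)^2‖ := by
                have := norm_sub_le (-(lam:ℂ) * Af f n t) (Aq g1 g2 n t / (t:ℂ))
                linarith
            _ ≤ |lam| * ‖X t‖ + ‖X t‖ + (n:ℝ)^2 * ‖X t‖ := by
                have := e1; have := e2; have := e3; linarith
            _ = K * ‖X t‖ := by rw [hKdef]; ring
        rw [Prod.norm_def]
        apply max_le
        · calc ‖Aq g1 g2 n t‖ ≤ ‖X t‖ := hAqle
            _ ≤ K * ‖X t‖ := by nlinarith [abs_nonneg lam, sq_nonneg ((n:ℝ))]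
        · exact hAh)
    have hXr : ‖X r‖ ≤ 0 := by
      have := key r (Set.mem_Icc.2 ⟨hr, le_rfl⟩)
      simpa [gronwallBound_ε0] using this
    have : X r = 0 := by
      have := norm_le_zero_iff.1 hXr
      exact this
    have := congrArg Prod.fst this
    simpa [hXdef] using this
  -- all modes vanish for all nonnegative radii
  have hAall : ∀ (n : ℤ) (r : ℝ), 0 ≤ r → Af f n r = 0 := by
    intro n r hr0
    rcases le_total r 1 with hr1 | hr1
    · exact hA0 n r hr0 hr1
    · exact hAbig n r hr1
  -- Fourier completeness: f vanishes on every circle around (1,0)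
  have hcirc : ∀ (r : ℝ), 0 ≤ r → ∀ θ : ℝ, f (crc r θ) = 0 := by
    intro r hr0 θ
    have hg : Continuous fun t : ℝ => ((f (crc r t) : ℝ) : ℂ) := by fun_prop
    have hper : Function.Periodic (fun t : ℝ => ((f (crc r t) : ℝ) : ℂ)) (2 * π) := by
      intro t
      have hcc : crc r (t + 2 * π) = crc r t := by
        unfold crc
        rw [Real.cos_add_two_pi, Real.sin_add_two_pi]
      show ((f (crc r (t + 2 * π)) : ℝ) : ℂ) = ((f (crc r t) : ℝ) : ℂ)
      rw [hcc]
    have hcoeffs : ∀ n : ℤ,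
        (∫ t in (0:ℝ)..2 * π, ((f (crc r t) : ℝ) : ℂ) * Complex.exp (-(n:ℂ) * t * Complex.I))
          = 0 := fun n => hAall n r hr0
    have := fourier_vanish hg hper hcoeffs θ
    exact_mod_cast this
  -- cover the plane by such circles
  intro p
  set z : ℂ := ((p.1 - 1 : ℝ) : ℂ) + (p.2 : ℝ) * Complex.I with hzdef
  by_cases hz : z = 0
  · have h1 : p.1 = 1 := by
      have := congrArg Complex.re hz
      simp [hzdef] at this
      linarith
    exact hzero p (by rw [h1]; norm_num)
  · set r : ℝ := ‖z‖ with hrdef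
    set θ : ℝ := Complex.arg z with hθdef
    have hre : z.re = p.1 - 1 := by simp [hzdef]
    have him : z.im = p.2 := by simp [hzdef]
    have hcos : r * Real.cos θ = p.1 - 1 := by
      rw [hrdef, hθdef, Complex.norm_mul_cos_arg, hre]
    have hsin : r * Real.sin θ = p.2 := by
      rw [hrdef, hθdef, Complex.norm_mul_sin_arg, him]
    have hc : crc r θ = p := by
      unfold crc
      ext
      · show 1 + r * Real.cos θ = p.1
        rw [hcos]; ring
      · exact hsin
    have := hcirc r (norm_nonneg z) θ
    rwa [hc] at this

end ReflectionAux

section Transform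

variable {F G : ℝ × ℝ → ℝ} {p : ℝ × ℝ}

lemma pdx_eq_fderiv (hF : DifferentiableAt ℝ F p) : pdx F p = fderiv ℝ F p (1, 0) :=
  (hasDerivAt_slice_x hF).deriv

lemma pdy_eq_fderiv (hF : DifferentiableAt ℝ F p) : pdy F p = fderiv ℝ F p (0, 1) :=
  (hasDerivAt_slice_y hF).deriv

lemma hasDerivAt_pdx (hF : DifferentiableAt ℝ F p) :
    HasDerivAt (fun x => F (x, p.2)) (pdx F p) p.1 := by
  have h := hasDerivAt_slice_x hF
  rwa [← pdx_eq_fderiv hF] at h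

lemma hasDerivAt_pdy (hF : DifferentiableAt ℝ F p) :
    HasDerivAt (fun y => F (p.1, y)) (pdy F p) p.2 := by
  have h := hasDerivAt_slice_y hF
  rwa [← pdy_eq_fderiv hF] at h

lemma comp_sigma_pdx (hG : Differentiable ℝ G) (p : ℝ × ℝ) :
    pdx (fun q => G (-q.1, q.2)) p = -pdx G (-p.1, p.2) := by
  have h1 : HasDerivAt (fun x => G (x, p.2)) (pdx G (-p.1, p.2)) (-p.1) :=
    hasDerivAt_pdx (p := (-p.1, p.2)) (hG _)
  have h2 : HasDerivAt (fun x : ℝ => -x) (-1) p.1 := hasDerivAt_neg p.1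
  have h3 := h1.comp p.1 h2
  have h3' : HasDerivAt (fun x => G (-x, p.2)) (pdx G (-p.1, p.2) * -1) p.1 := by
    simpa [Function.comp_def] using h3
  show deriv (fun x => G (-x, p.2)) p.1 = _
  rw [h3'.deriv]
  ring

lemma comp_sigma_pdy (G : ℝ × ℝ → ℝ) (p : ℝ × ℝ) :
    pdy (fun q => G (-q.1, q.2)) p = pdy G (-p.1, p.2) := rfl

/-- the gauge factor -/
noncomputable def Efun (a b : ℝ) : ℝ × ℝ → ℝ := fun p => Real.exp ((a * p.1 + b * p.2) / 2)

lemma Efun_contDiff (a b : ℝ) : ContDiff ℝ 2 (Efun a b) := by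
  apply (Real.contDiff_exp.of_le le_top).comp
  exact (by fun_prop : ContDiff ℝ 2 fun p : ℝ × ℝ => a * p.1 + b * p.2).div_const 2

lemma hasDerivAt_Efun_x (a b : ℝ) (p : ℝ × ℝ) :
    HasDerivAt (fun x => Efun a b (x, p.2)) (a / 2 * Efun a b p) p.1 := by
  have h1 : HasDerivAt (fun x : ℝ => (a * x + b * p.2) / 2) (a / 2) p.1 := by
    simpa using (((hasDerivAt_id p.1).const_mul a).add_const (b * p.2)).div_const 2
  have := h1.exp
  simpa [Efun, mul_comm] using this

lemma hasDerivAt_Efun_y (a b : ℝ) (p : ℝ × ℝ) :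
    HasDerivAt (fun y => Efun a b (p.1, y)) (b / 2 * Efun a b p) p.2 := by
  have h1 : HasDerivAt (fun y : ℝ => (a * p.1 + b * y) / 2) (b / 2) p.2 := by
    simpa using (((hasDerivAt_id p.2).const_mul b).const_add (a * p.1)).div_const 2
  have := h1.exp
  simpa [Efun, mul_comm] using this

/-- the gauged function -/
noncomputable def mfun (a b : ℝ) (u : ℝ × ℝ → ℝ) : ℝ × ℝ → ℝ := fun p => Efun a b p * u p

lemma mfun_contDiff {a b : ℝ} {u : ℝ × ℝ → ℝ} (hu : ContDiff ℝ 2 u) :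
    ContDiff ℝ 2 (mfun a b u) := (Efun_contDiff a b).mul hu

variable {a b : ℝ} {u : ℝ × ℝ → ℝ}

lemma pdx_mfun (hu : ContDiff ℝ 2 u) (p : ℝ × ℝ) :
    pdx (mfun a b u) p = a / 2 * mfun a b u p + Efun a b p * pdx u p := by
  have hud : DifferentiableAt ℝ u p := hu.differentiable (by norm_num) p
  have h := (hasDerivAt_Efun_x a b p).mul (hasDerivAt_pdx hud)
  have h' : HasDerivAt (fun x => mfun a b u (x, p.2))
      (a / 2 * Efun a b p * u p + Efun a b p * pdx u p) p.1 := h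
  rw [show pdx (mfun a b u) p = deriv (fun x => mfun a b u (x, p.2)) p.1 from rfl, h'.deriv,
    mfun]
  ring

lemma pdy_mfun (hu : ContDiff ℝ 2 u) (p : ℝ × ℝ) :
    pdy (mfun a b u) p = b / 2 * mfun a b u p + Efun a b p * pdy u p := by
  have hud : DifferentiableAt ℝ u p := hu.differentiable (by norm_num) p
  have h := (hasDerivAt_Efun_y a b p).mul (hasDerivAt_pdy hud)
  have h' : HasDerivAt (fun y => mfun a b u (p.1, y))
      (b / 2 * Efun a b p * u p + Efun a b p * pdy u p) p.2 := h
  rw [show pdy (mfun a b u) p = deriv (fun y => mfun a b u (p.1, y)) p.2 from rfl, h'.deriv,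
    mfun]
  ring

lemma pdxu_contDiff (hu : ContDiff ℝ 2 u) : ContDiff ℝ 1 (pdx u) := by
  have hud : Differentiable ℝ u := hu.differentiable (by norm_num)
  have heq : pdx u = fun q => fderiv ℝ u q (1, 0) :=
    funext fun q => pdx_eq_fderiv (hud q)
  rw [heq]
  exact (hu.fderiv_right (m := 1) (by norm_num)).clm_apply contDiff_const

lemma pdyu_contDiff (hu : ContDiff ℝ 2 u) : ContDiff ℝ 1 (pdy u) := by
  have hud : Differentiable ℝ u := hu.differentiable (by norm_num)
  have heq : pdy u = fun q => fderiv ℝ u q (0, 1) :=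
    funext fun q => pdy_eq_fderiv (hud q)
  rw [heq]
  exact (hu.fderiv_right (m := 1) (by norm_num)).clm_apply contDiff_const

lemma pdxx_mfun (hu : ContDiff ℝ 2 u) (p : ℝ × ℝ) :
    pdx (pdx (mfun a b u)) p = a ^ 2 / 4 * mfun a b u p + a * (Efun a b p * pdx u p)
      + Efun a b p * pdx (pdx u) p := by
  have hud : Differentiable ℝ u := hu.differentiable (by norm_num)
  have hu1 : Differentiable ℝ (pdx u) := (pdxu_contDiff hu).differentiable one_ne_zero
  have hm : ContDiff ℝ 2 (mfun a b u) := mfun_contDiff hu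
  have heq : pdx (mfun a b u) = fun q => a / 2 * mfun a b u q + Efun a b q * pdx u q :=
    funext (pdx_mfun hu)
  have hd1 : HasDerivAt (fun x => mfun a b u (x, p.2)) (pdx (mfun a b u) p) p.1 :=
    hasDerivAt_pdx ((hm.differentiable (by norm_num)) p)
  have hd2 : HasDerivAt (fun x => pdx u (x, p.2)) (pdx (pdx u) p) p.1 :=
    hasDerivAt_pdx (hu1 p)
  have h : HasDerivAt (fun x => a / 2 * mfun a b u (x, p.2) + Efun a b (x, p.2) * pdx u (x, p.2))
      (a / 2 * pdx (mfun a b u) p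
        + (a / 2 * Efun a b p * pdx u p + Efun a b p * pdx (pdx u) p)) p.1 :=
    (hd1.const_mul (a / 2)).add ((hasDerivAt_Efun_x a b p).mul hd2)
  have hslice : (fun x => pdx (mfun a b u) (x, p.2))
      = fun x => a / 2 * mfun a b u (x, p.2) + Efun a b (x, p.2) * pdx u (x, p.2) := by
    funext x
    exact congrFun heq (x, p.2)
  rw [show pdx (pdx (mfun a b u)) p = deriv (fun x => pdx (mfun a b u) (x, p.2)) p.1 from rfl,
    hslice, h.deriv, pdx_mfun hu p]
  ring

lemma pdyy_mfun (hu : ContDiff ℝ 2 u) (p : ℝ × ℝ) :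
    pdy (pdy (mfun a b u)) p = b ^ 2 / 4 * mfun a b u p + b * (Efun a b p * pdy u p)
      + Efun a b p * pdy (pdy u) p := by
  have hud : Differentiable ℝ u := hu.differentiable (by norm_num)
  have hu2 : Differentiable ℝ (pdy u) := (pdyu_contDiff hu).differentiable one_ne_zero
  have hm : ContDiff ℝ 2 (mfun a b u) := mfun_contDiff hu
  have heq : pdy (mfun a b u) = fun q => b / 2 * mfun a b u q + Efun a b q * pdy u q :=
    funext (pdy_mfun hu)
  have hd1 : HasDerivAt (fun y => mfun a b u (p.1, y)) (pdy (mfun a b u) p) p.2 :=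
    hasDerivAt_pdy ((hm.differentiable (by norm_num)) p)
  have hd2 : HasDerivAt (fun y => pdy u (p.1, y)) (pdy (pdy u) p) p.2 :=
    hasDerivAt_pdy (hu2 p)
  have h : HasDerivAt (fun y => b / 2 * mfun a b u (p.1, y) + Efun a b (p.1, y) * pdy u (p.1, y))
      (b / 2 * pdy (mfun a b u) p
        + (b / 2 * Efun a b p * pdy u p + Efun a b p * pdy (pdy u) p)) p.2 :=
    (hd1.const_mul (b / 2)).add ((hasDerivAt_Efun_y a b p).mul hd2)
  have hslice : (fun y => pdy (mfun a b u) (p.1, y))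
      = fun y => b / 2 * mfun a b u (p.1, y) + Efun a b (p.1, y) * pdy u (p.1, y) := by
    funext y
    exact congrFun heq (p.1, y)
  rw [show pdy (pdy (mfun a b u)) p = deriv (fun y => pdy (mfun a b u) (p.1, y)) p.2 from rfl,
    hslice, h.deriv, pdy_mfun hu p]
  ring

/-- the gauged function satisfies `Δm + λ m = 0` with `λ = c - (a²+b²)/4`. -/
lemma PDE_mfun {c : ℝ} (hu : ContDiff ℝ 2 u)
    (hueq : ∀ p : ℝ × ℝ,
      pdx (pdx u) p + pdy (pdy u) p + a * pdx u p + b * pdy u p + c * u p = 0)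
    (p : ℝ × ℝ) :
    pdx (pdx (mfun a b u)) p + pdy (pdy (mfun a b u)) p
      + (c - (a ^ 2 + b ^ 2) / 4) * mfun a b u p = 0 := by
  rw [pdxx_mfun hu p, pdyy_mfun hu p]
  have h := hueq p
  unfold mfun
  linear_combination Efun a b p * h

end Transform

/-- Point-to-point reflection across the line `x = 0` for solutions of
`Δu + a uₓ + b u_y + c u = 0` vanishing on that line. -/
theorem reflection_across_y_axis
    (a b c : ℝ)
    (u : ℝ × ℝ → ℝ) (hu : ContDiff ℝ 2 u)
    (hueq : ∀ p : ℝ × ℝ,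
      pdx (pdx u) p + pdy (pdy u) p + a * pdx u p + b * pdy u p + c * u p = 0)
    (huΓ : ∀ y : ℝ, u (0, y) = 0) :
    ∀ x₀ y₀ : ℝ, u (x₀, y₀) = -Real.exp (-a * x₀) * u (-x₀, y₀) := by
  intro x₀ y₀
  have hud : Differentiable ℝ u := hu.differentiable (by norm_num)
  have hmC : ContDiff ℝ 2 (mfun a b u) := mfun_contDiff hu
  have hσC : ContDiff ℝ 2 (fun p : ℝ × ℝ => ((-p.1, p.2) : ℝ × ℝ)) := by fun_prop
  set w : ℝ × ℝ → ℝ := fun p => mfun a b u p + mfun a b u (-p.1, p.2) with hwdef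
  have hwC : ContDiff ℝ 2 w := hmC.add (hmC.comp hσC)
  have hwd : Differentiable ℝ w := hwC.differentiable (by norm_num)
  set lam : ℝ := c - (a ^ 2 + b ^ 2) / 4 with hlam
  have hmd : Differentiable ℝ (mfun a b u) := hmC.differentiable (by norm_num)
  have hm1d : Differentiable ℝ (pdx (mfun a b u)) := (pdxu_contDiff hmC).differentiable one_ne_zero
  -- PDE for the reflected part
  have hmσ_pdx : ∀ p : ℝ × ℝ,
      pdx (fun q => mfun a b u (-q.1, q.2)) p = -pdx (mfun a b u) (-p.1, p.2) :=
    comp_sigma_pdx hmd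
  have e1 : pdx (fun q => mfun a b u (-q.1, q.2))
      = fun p => -pdx (mfun a b u) (-p.1, p.2) := funext hmσ_pdx
  have hmσ_pdxx : ∀ p : ℝ × ℝ,
      pdx (pdx (fun q => mfun a b u (-q.1, q.2))) p = pdx (pdx (mfun a b u)) (-p.1, p.2) := by
    intro p
    rw [e1]
    have hneg : pdx (fun q : ℝ × ℝ => -pdx (mfun a b u) (-q.1, q.2)) p
        = -pdx (fun q : ℝ × ℝ => pdx (mfun a b u) (-q.1, q.2)) p := by
      show deriv (fun x => -(fun q : ℝ × ℝ => pdx (mfun a b u) (-q.1, q.2)) (x, p.2)) p.1 = _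
      rw [deriv.fun_neg]
      rfl
    rw [hneg, comp_sigma_pdx hm1d p]
    ring
  have hmσ_pdy : pdy (fun q => mfun a b u (-q.1, q.2))
      = fun p => pdy (mfun a b u) (-p.1, p.2) := funext fun p => comp_sigma_pdy (mfun a b u) p
  have hmσ_pdyy : ∀ p : ℝ × ℝ,
      pdy (pdy (fun q => mfun a b u (-q.1, q.2))) p = pdy (pdy (mfun a b u)) (-p.1, p.2) := by
    intro p
    rw [hmσ_pdy]
    exact comp_sigma_pdy (pdy (mfun a b u)) p
  have hmσd : Differentiable ℝ (fun q : ℝ × ℝ => mfun a b u (-q.1, q.2)) :=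
    hmd.comp (hσC.differentiable (by norm_num))
  have hmσ1d : Differentiable ℝ (pdx (fun q : ℝ × ℝ => mfun a b u (-q.1, q.2))) := by
    rw [e1]
    have : Differentiable ℝ (fun p : ℝ × ℝ => pdx (mfun a b u) (-p.1, p.2)) :=
      hm1d.comp (hσC.differentiable (by norm_num))
    exact this.neg
  -- additivity of the slice derivatives for `w`
  have hslx : ∀ p : ℝ × ℝ, pdx w p
      = pdx (mfun a b u) p + pdx (fun q => mfun a b u (-q.1, q.2)) p := by
    intro p
    show deriv (fun x => mfun a b u (x, p.2)
        + (fun q : ℝ × ℝ => mfun a b u (-q.1, q.2)) (x, p.2)) p.1 = _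
    rw [deriv_fun_add (hasDerivAt_pdx (p := p) (hmd p)).differentiableAt
      (hasDerivAt_pdx (p := p) (hmσd p)).differentiableAt]
    rfl
  have hsly : ∀ p : ℝ × ℝ, pdy w p
      = pdy (mfun a b u) p + pdy (fun q => mfun a b u (-q.1, q.2)) p := by
    intro p
    show deriv (fun y => mfun a b u (p.1, y)
        + (fun q : ℝ × ℝ => mfun a b u (-q.1, q.2)) (p.1, y)) p.2 = _
    rw [deriv_fun_add (hasDerivAt_pdy (p := p) (hmd p)).differentiableAt
      (hasDerivAt_pdy (p := p) (hmσd p)).differentiableAt]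
    rfl
  have hm2d : Differentiable ℝ (pdy (mfun a b u)) := (pdyu_contDiff hmC).differentiable one_ne_zero
  have hmσ2d : Differentiable ℝ (pdy (fun q : ℝ × ℝ => mfun a b u (-q.1, q.2))) := by
    rw [hmσ_pdy]
    exact hm2d.comp (hσC.differentiable (by norm_num))
  have hslxx : ∀ p : ℝ × ℝ, pdx (pdx w) p
      = pdx (pdx (mfun a b u)) p + pdx (pdx (fun q => mfun a b u (-q.1, q.2))) p := by
    intro p
    have hfe : pdx w = fun q => pdx (mfun a b u) q
        + pdx (fun q' => mfun a b u (-q'.1, q'.2)) q := funext hslx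
    rw [hfe]
    show deriv (fun x => pdx (mfun a b u) (x, p.2)
        + (fun q : ℝ × ℝ => pdx (fun q' => mfun a b u (-q'.1, q'.2)) q) (x, p.2)) p.1 = _
    rw [deriv_fun_add (hasDerivAt_pdx (p := p) (hm1d p)).differentiableAt
      (hasDerivAt_pdx (p := p) (hmσ1d p)).differentiableAt]
    rfl
  have hslyy : ∀ p : ℝ × ℝ, pdy (pdy w) p
      = pdy (pdy (mfun a b u)) p + pdy (pdy (fun q => mfun a b u (-q.1, q.2))) p := by
    intro p
    have hfe : pdy w = fun q => pdy (mfun a b u) q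
        + pdy (fun q' => mfun a b u (-q'.1, q'.2)) q := funext hsly
    rw [hfe]
    show deriv (fun y => pdy (mfun a b u) (p.1, y)
        + (fun q : ℝ × ℝ => pdy (fun q' => mfun a b u (-q'.1, q'.2)) q) (p.1, y)) p.2 = _
    rw [deriv_fun_add (hasDerivAt_pdy (p := p) (hm2d p)).differentiableAt
      (hasDerivAt_pdy (p := p) (hmσ2d p)).differentiableAt]
    rfl
  -- the PDE for `w`
  have hwPDE : ∀ p : ℝ × ℝ, pdx (pdx w) p + pdy (pdy w) p + lam * w p = 0 := by
    intro p
    rw [hslxx p, hslyy p, hmσ_pdxx p, hmσ_pdyy p]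
    have h1 := PDE_mfun hu hueq p
    have h2 := PDE_mfun hu hueq ((-p.1, p.2) : ℝ × ℝ)
    have hwp : w p = mfun a b u p + mfun a b u (-p.1, p.2) := rfl
    rw [hwp, hlam]
    linarith [h1, h2]
  -- jets of `w` on the line
  have j0 : ∀ y : ℝ, w ((0:ℝ), y) = 0 := by
    intro y
    show mfun a b u (0, y) + mfun a b u (-0, y) = 0
    rw [neg_zero]
    unfold mfun
    rw [huΓ y]
    ring
  have jeven : ∀ p : ℝ × ℝ, w (-p.1, p.2) = w p := by
    intro p
    show mfun a b u (-p.1, p.2) + mfun a b u (- -p.1, p.2)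
        = mfun a b u p + mfun a b u (-p.1, p.2)
    rw [neg_neg]
    ring
  have j1 : ∀ y : ℝ, pdx w ((0:ℝ), y) = 0 := by
    intro y
    have hd : HasDerivAt (fun x => w (x, y)) (pdx w ((0:ℝ), y)) 0 :=
      hasDerivAt_pdx (p := ((0:ℝ), y)) (hwd ((0:ℝ), y))
    have hd0 : HasDerivAt (fun x => w (x, y)) (pdx w ((0:ℝ), y)) (-0 : ℝ) := by
      rw [neg_zero]; exact hd
    have hdneg : HasDerivAt (fun x : ℝ => w (-x, y)) (pdx w ((0:ℝ), y) * -1) 0 := by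
      simpa [Function.comp_def] using hd0.comp 0 (hasDerivAt_neg (0:ℝ))
    have hgeq : (fun x : ℝ => w (-x, y)) = fun x => w (x, y) :=
      funext fun x => jeven ((x, y) : ℝ × ℝ)
    rw [hgeq] at hdneg
    have := hd.unique hdneg
    linarith
  have j2 : ∀ y : ℝ, pdy w ((0:ℝ), y) = 0 := by
    intro y
    show deriv (fun t => w ((0:ℝ), t)) y = 0
    rw [show (fun t => w ((0:ℝ), t)) = fun _ => (0:ℝ) from funext j0]
    exact deriv_const y 0
  have j22 : ∀ y : ℝ, pdy (pdy w) ((0:ℝ), y) = 0 := by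
    intro y
    show deriv (fun t => pdy w ((0:ℝ), t)) y = 0
    rw [show (fun t => pdy w ((0:ℝ), t)) = fun _ => (0:ℝ) from funext j2]
    exact deriv_const y 0
  have j12 : ∀ y : ℝ, pdy (pdx w) ((0:ℝ), y) = 0 := by
    intro y
    show deriv (fun t => pdx w ((0:ℝ), t)) y = 0
    rw [show (fun t => pdx w ((0:ℝ), t)) = fun _ => (0:ℝ) from funext j1]
    exact deriv_const y 0
  have j11 : ∀ y : ℝ, pdx (pdx w) ((0:ℝ), y) = 0 := by
    intro y
    have := hwPDE ((0:ℝ), y)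
    rw [j22 y, j0 y] at this
    linarith
  -- mixed symmetry
  have hw1C : ContDiff ℝ 1 (pdx w) := pdxu_contDiff hwC
  have hw2C : ContDiff ℝ 1 (pdy w) := pdyu_contDiff hwC
  have hsym : ∀ p : ℝ × ℝ, pdx (pdy w) p = pdy (pdx w) p := by
    intro p
    have hfd : HasFDerivAt (fderiv ℝ w) (fderiv ℝ (fderiv ℝ w) p) p :=
      (((hwC.fderiv_right (m := 1) (by norm_num)).differentiable one_ne_zero) p).hasFDerivAt
    have hsymm := second_derivative_symmetric (f := w)
      (fun y => (hwd y).hasFDerivAt) hfd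
    set L1 : (ℝ × ℝ →L[ℝ] ℝ) →L[ℝ] ℝ :=
      ContinuousLinearMap.apply ℝ ℝ (((1:ℝ), (0:ℝ)) : ℝ × ℝ) with hL1
    set L2 : (ℝ × ℝ →L[ℝ] ℝ) →L[ℝ] ℝ :=
      ContinuousLinearMap.apply ℝ ℝ (((0:ℝ), (1:ℝ)) : ℝ × ℝ) with hL2
    have ew1 : pdx w = fun q => L1 (fderiv ℝ w q) := funext fun q => pdx_eq_fderiv (hwd q)
    have ew2 : pdy w = fun q => L2 (fderiv ℝ w q) := funext fun q => pdy_eq_fderiv (hwd q)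
    have hc1 : HasFDerivAt (fun q => L1 (fderiv ℝ w q))
        (L1.comp (fderiv ℝ (fderiv ℝ w) p)) p := L1.hasFDerivAt.comp p hfd
    have hc2 : HasFDerivAt (fun q => L2 (fderiv ℝ w q))
        (L2.comp (fderiv ℝ (fderiv ℝ w) p)) p := L2.hasFDerivAt.comp p hfd
    have hxy : pdx (pdy w) p = fderiv ℝ (fderiv ℝ w) p ((1:ℝ), (0:ℝ)) ((0:ℝ), (1:ℝ)) := by
      rw [pdx_eq_fderiv (by rw [ew2]; exact hc2.differentiableAt), ew2, hc2.fderiv]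
      rfl
    have hyx : pdy (pdx w) p = fderiv ℝ (fderiv ℝ w) p ((0:ℝ), (1:ℝ)) ((1:ℝ), (0:ℝ)) := by
      rw [pdy_eq_fderiv (by rw [ew1]; exact hc1.differentiableAt), ew1, hc1.fderiv]
      rfl
    rw [hxy, hyx, hsymm]
  -- HasFDerivAt statements in `lin2` form
  have hdww : ∀ p : ℝ × ℝ, HasFDerivAt w (lin2 (pdx w p) (pdy w p)) p := by
    intro p
    have h := (hwd p).hasFDerivAt
    rw [clm_eq_lin2 (fderiv ℝ w p)] at h
    rwa [← pdx_eq_fderiv (hwd p), ← pdy_eq_fderiv (hwd p)] at h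
  have hdW1 : ∀ p : ℝ × ℝ, HasFDerivAt (pdx w) (lin2 (pdx (pdx w) p) (pdy (pdx w) p)) p := by
    intro p
    have hda : DifferentiableAt ℝ (pdx w) p := (hw1C.differentiable one_ne_zero) p
    have h := hda.hasFDerivAt
    rw [clm_eq_lin2 (fderiv ℝ (pdx w) p)] at h
    rwa [← pdx_eq_fderiv hda, ← pdy_eq_fderiv hda] at h
  have hdW2 : ∀ p : ℝ × ℝ, HasFDerivAt (pdy w) (lin2 (pdy (pdx w) p) (pdy (pdy w) p)) p := by
    intro p
    have hda : DifferentiableAt ℝ (pdy w) p := (hw2C.differentiable one_ne_zero) p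
    have h := hda.hasFDerivAt
    rw [clm_eq_lin2 (fderiv ℝ (pdy w) p)] at h
    rw [← pdx_eq_fderiv hda, ← pdy_eq_fderiv hda] at h
    rwa [hsym p] at h
  -- continuity of the second derivatives
  have hW11c : Continuous (pdx (pdx w)) := by
    have heqq : pdx (pdx w) = fun p => fderiv ℝ (pdx w) p ((1:ℝ), (0:ℝ)) :=
      funext fun p => pdx_eq_fderiv ((hw1C.differentiable one_ne_zero) p)
    rw [heqq]
    exact (ContinuousLinearMap.apply ℝ ℝ (((1:ℝ), (0:ℝ)) : ℝ × ℝ)).continuous.comp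
      (hw1C.continuous_fderiv one_ne_zero)
  have hW12c : Continuous (pdy (pdx w)) := by
    have heqq : pdy (pdx w) = fun p => fderiv ℝ (pdx w) p ((0:ℝ), (1:ℝ)) :=
      funext fun p => pdy_eq_fderiv ((hw1C.differentiable one_ne_zero) p)
    rw [heqq]
    exact (ContinuousLinearMap.apply ℝ ℝ (((0:ℝ), (1:ℝ)) : ℝ × ℝ)).continuous.comp
      (hw1C.continuous_fderiv one_ne_zero)
  have hW22c : Continuous (pdy (pdy w)) := by
    have heqq : pdy (pdy w) = fun p => fderiv ℝ (pdy w) p ((0:ℝ), (1:ℝ)) :=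
      funext fun p => pdy_eq_fderiv ((hw2C.differentiable one_ne_zero) p)
    rw [heqq]
    exact (ContinuousLinearMap.apply ℝ ℝ (((0:ℝ), (1:ℝ)) : ℝ × ℝ)).continuous.comp
      (hw2C.continuous_fderiv one_ne_zero)
  -- glue and apply the half-plane uniqueness theorem
  have hvan := halfplane_vanish (lam := lam)
    (f := fun q : ℝ × ℝ => if q.1 < 0 then w q else 0)
    (g1 := fun q : ℝ × ℝ => if q.1 < 0 then pdx w q else 0)
    (g2 := fun q : ℝ × ℝ => if q.1 < 0 then pdy w q else 0)
    (h11 := fun q : ℝ × ℝ => if q.1 < 0 then pdx (pdx w) q else 0)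
    (h12 := fun q : ℝ × ℝ => if q.1 < 0 then pdy (pdx w) q else 0)
    (h22 := fun q : ℝ × ℝ => if q.1 < 0 then pdy (pdy w) q else 0)
    (glue_cont hwC.continuous j0)
    (glue_cont hw1C.continuous j1)
    (glue_cont hw2C.continuous j2)
    (glue_cont hW11c j11)
    (glue_cont hW12c j12)
    (glue_cont hW22c j22)
    (fun p => glue_deriv hw1C.continuous hw2C.continuous hdww j0 j1 j2 p)
    (fun p => glue_deriv hW11c hW12c hdW1 j1 j11 j12 p)
    (fun p => glue_deriv hW12c hW22c hdW2 j2 j12 j22 p)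
    (by
      intro p
      by_cases hp : p.1 < 0
      · simp only [if_pos hp]
        exact hwPDE p
      · simp [if_neg hp])
    (by
      intro p hp
      simp [not_lt.mpr hp])
  have hwneg : ∀ p : ℝ × ℝ, p.1 < 0 → w p = 0 := by
    intro p hp
    have := hvan p
    simpa [if_pos hp] using this
  have hwall : ∀ p : ℝ × ℝ, w p = 0 := by
    intro p
    rcases lt_trichotomy p.1 0 with h | h | h
    · exact hwneg p h
    · have hp2 : p = ((0:ℝ), p.2) := by ext <;> simp [h]
      rw [hp2]
      exact j0 p.2
    · have h2 := jeven p
      have h3 : w (-p.1, p.2) = 0 := hwneg ((-p.1, p.2) : ℝ × ℝ) (by simpa using h)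
      rw [← h2]
      exact h3
  -- conclude
  have hwp := hwall ((x₀, y₀) : ℝ × ℝ)
  rw [hwdef] at hwp
  have hwp' : Real.exp ((a * x₀ + b * y₀) / 2) * u (x₀, y₀)
      + Real.exp ((-(a * x₀) + b * y₀) / 2) * u (-x₀, y₀) = 0 := by
    simpa [mfun, Efun] using hwp
  have hsplit : Real.exp ((-(a * x₀) + b * y₀) / 2)
      = Real.exp (-a * x₀) * Real.exp ((a * x₀ + b * y₀) / 2) := by
    rw [← Real.exp_add]
    congr 1
    ring
  have hkey : Real.exp ((a * x₀ + b * y₀) / 2) * u (x₀, y₀)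
      = Real.exp ((a * x₀ + b * y₀) / 2) * (-Real.exp (-a * x₀) * u (-x₀, y₀)) := by
    linear_combination hwp' - u (-x₀, y₀) * hsplit
  exact mul_left_cancel₀ (Real.exp_ne_zero _) hkey
end
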